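/- arXiv:2511.22487 — 2 statements merged into one kernel-verified Lean document; each statement's English description precedes it below -/
import Mathlib

section
/- For positive semidefinite matrices A and B whose support projections Π_A and Π_B commute, the generalized geometric means satisfy: M(B⁺, A⁺) is the Moore–Penrose pseudoinverse of M(A,B). -/
open scoped ComplexOrder

open Classical in
/-- The unique positive semidefinite square root of a positive semidefinite matrix
(junk value 0 otherwise). -/
noncomputable def psqrt {n : Type*} [Fintype n] [DecidableEq n] (X : Matrix n n ℂ) :
    Matrix n n ℂ :=
  if h : X.PosSemidef then
    (h.1.eigenvectorUnitary : Matrix n n ℂ) *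
      Matrix.diagonal ((↑) ∘ Real.sqrt ∘ h.1.eigenvalues) *
      (star h.1.eigenvectorUnitary : Matrix n n ℂ)
  else 0

/-- The range (support) of a matrix, i.e. the orthogonal complement of its kernel. -/
noncomputable def msupp {n : Type*} [Fintype n] [DecidableEq n] (X : Matrix n n ℂ) :
    Submodule ℂ (EuclideanSpace ℂ n) :=
  (LinearMap.ker (Matrix.toEuclideanLin X))ᗮ

/-- The kernel of a matrix, as a subspace of Euclidean space. -/
noncomputable def mker {n : Type*} [Fintype n] [DecidableEq n] (X : Matrix n n ℂ) :
    Submodule ℂ (EuclideanSpace ℂ n) :=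
  LinearMap.ker (Matrix.toEuclideanLin X)

/-- The generalized geometric mean M(A,B) = √A · √(√(A⁺) B √(A⁺)) · √A, where Ap
stands for the Moore–Penrose pseudoinverse A⁺ of A. -/
noncomputable def geoMean {n : Type*} [Fintype n] [DecidableEq n]
    (A Ap B : Matrix n n ℂ) : Matrix n n ℂ :=
  psqrt A * psqrt (psqrt Ap * B * psqrt Ap) * psqrt A

open Matrix in
/-- `Ap` is the Moore–Penrose pseudoinverse of `A` (the four Penrose conditions). -/
def IsMPInv {n : Type*} [Fintype n] [DecidableEq n] (A Ap : Matrix n n ℂ) : Prop :=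
  A * Ap * A = A ∧ Ap * A * Ap = Ap ∧ (A * Ap)ᴴ = A * Ap ∧ (Ap * A)ᴴ = Ap * A

namespace GeoMeanAux
open Matrix
variable {n : Type*} [Fintype n] [DecidableEq n]

/-- the function x ↦ (√x)⁻¹ -/
noncomputable def gg : ℝ → ℝ := fun x => (Real.sqrt x)⁻¹

/-- the indicator of nonzero reals -/
noncomputable def chi : ℝ → ℝ := fun x => if x = 0 then 0 else 1

lemma pw_sqrt_gg : ∀ x : ℝ, 0 ≤ x → Real.sqrt x * gg x = chi x := by
  intro x hx
  rcases eq_or_lt_of_le hx with h | h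
  · simp [gg, chi, ← h]
  · rw [gg, chi, if_neg (ne_of_gt h)]
    exact mul_inv_cancel₀ (ne_of_gt (Real.sqrt_pos.mpr h))

lemma pw_gg_sqrt : ∀ x : ℝ, 0 ≤ x → gg x * Real.sqrt x = chi x := by
  intro x hx
  rw [mul_comm]
  exact pw_sqrt_gg x hx

lemma pw_sqrt_sqrt : ∀ x : ℝ, 0 ≤ x → Real.sqrt x * Real.sqrt x = x := fun x hx =>
  Real.mul_self_sqrt hx

lemma pw_gg_gg : ∀ x : ℝ, 0 ≤ x → gg x * gg x = x⁻¹ := by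
  intro x hx
  rw [gg, ← mul_inv, Real.mul_self_sqrt hx]

lemma pw_id_gg : ∀ x : ℝ, 0 ≤ x → x * gg x = Real.sqrt x := by
  intro x hx
  rcases eq_or_lt_of_le hx with h | h
  · simp [gg, ← h]
  · rw [gg]
    nth_rewrite 1 [← Real.mul_self_sqrt hx]
    rw [mul_assoc, mul_inv_cancel₀ (ne_of_gt (Real.sqrt_pos.mpr h)), mul_one]

lemma pw_id_inv : ∀ x : ℝ, 0 ≤ x → x * x⁻¹ = chi x := by
  intro x _
  by_cases h : x = 0
  · simp [chi, h]
  · rw [chi, if_neg h]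
    exact mul_inv_cancel₀ h

lemma pw_inv_id : ∀ x : ℝ, 0 ≤ x → x⁻¹ * x = chi x := by
  intro x hx
  rw [mul_comm]
  exact pw_id_inv x hx

lemma pw_chi_id : ∀ x : ℝ, 0 ≤ x → chi x * x = x := by
  intro x _
  by_cases h : x = 0 <;> simp [chi, h]

lemma pw_id_chi : ∀ x : ℝ, 0 ≤ x → x * chi x = x := by
  intro x hx
  rw [mul_comm]
  exact pw_chi_id x hx

lemma pw_chi_inv : ∀ x : ℝ, 0 ≤ x → chi x * x⁻¹ = x⁻¹ := by
  intro x _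
  by_cases h : x = 0 <;> simp [chi, h]

lemma pw_chi_sqrt : ∀ x : ℝ, 0 ≤ x → chi x * Real.sqrt x = Real.sqrt x := by
  intro x _
  by_cases h : x = 0 <;> simp [chi, h]

lemma pw_sqrt_chi : ∀ x : ℝ, 0 ≤ x → Real.sqrt x * chi x = Real.sqrt x := by
  intro x hx
  rw [mul_comm]
  exact pw_chi_sqrt x hx

lemma pw_chi_gg : ∀ x : ℝ, 0 ≤ x → chi x * gg x = gg x := by
  intro x _
  by_cases h : x = 0 <;> simp [chi, gg, h]

lemma pw_gg_chi : ∀ x : ℝ, 0 ≤ x → gg x * chi x = gg x := by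
  intro x hx
  rw [mul_comm]
  exact pw_chi_gg x hx

lemma pw_chi_chi : ∀ x : ℝ, 0 ≤ x → chi x * chi x = chi x := by
  intro x _
  by_cases h : x = 0 <;> simp [chi, h]

lemma cont_on_spec (f : ℝ → ℝ) (M : Matrix n n ℂ) : ContinuousOn f (spectrum ℝ M) := by
  rw [continuousOn_iff_continuous_restrict]
  fun_prop

lemma spec_nonneg {M : Matrix n n ℂ} (hM : M.PosSemidef) : ∀ x ∈ spectrum ℝ M, 0 ≤ x := by
  intro x hx
  rw [hM.1.spectrum_real_eq_range_eigenvalues] at hx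
  obtain ⟨i, rfl⟩ := hx
  exact hM.eigenvalues_nonneg i

lemma cfc_posSemidef {M : Matrix n n ℂ} (hM : M.IsHermitian) (f : ℝ → ℝ)
    (hf : ∀ x ∈ spectrum ℝ M, 0 ≤ f x) : (cfc f M).PosSemidef := by
  rw [hM.cfc_eq f, Matrix.IsHermitian.cfc]
  rw [Unitary.conjStarAlgAut_apply, star_eq_conjTranspose]
  apply Matrix.PosSemidef.mul_mul_conjTranspose_same
  refine posSemidef_diagonal_iff.mpr fun i ↦ ?_
  rw [Function.comp_apply, RCLike.nonneg_iff]
  constructor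
  · simpa using hf _ (hM.eigenvalues_mem_spectrum_real i)
  · simp

lemma cfc_herm (f : ℝ → ℝ) (M : Matrix n n ℂ) : (cfc f M).IsHermitian := by
  have h : _root_.IsSelfAdjoint (cfc f M) := cfc_predicate f M
  have h2 := h.star_eq
  rwa [star_eq_conjTranspose] at h2

lemma cfc_mul_cfc {M : Matrix n n ℂ} (hM : M.PosSemidef) (f g h : ℝ → ℝ)
    (hfgh : ∀ x, 0 ≤ x → f x * g x = h x) : cfc f M * cfc g M = cfc h M := by
  rw [← cfc_mul f g M (cont_on_spec f M) (cont_on_spec g M)]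
  exact cfc_congr fun x hx => hfgh x (spec_nonneg hM x hx)

lemma cfc_id_eq {M : Matrix n n ℂ} (hM : M.IsHermitian) : cfc (fun x : ℝ => x) M = M :=
  cfc_id' ℝ M hM.isSelfAdjoint

lemma cfc_mul_left {M : Matrix n n ℂ} (hM : M.PosSemidef) (f h : ℝ → ℝ)
    (hp : ∀ x, 0 ≤ x → x * f x = h x) : M * cfc f M = cfc h M := by
  nth_rewrite 1 [← cfc_id_eq hM.1]
  exact cfc_mul_cfc hM _ f h hp

lemma cfc_mul_right {M : Matrix n n ℂ} (hM : M.PosSemidef) (f h : ℝ → ℝ)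
    (hp : ∀ x, 0 ≤ x → f x * x = h x) : cfc f M * M = cfc h M := by
  nth_rewrite 2 [← cfc_id_eq hM.1]
  exact cfc_mul_cfc hM f _ h hp

lemma psqrt_unique {V W : Matrix n n ℂ} (hW : W.PosSemidef) (h : W * W = V) : psqrt V = W := by
  have hV : V.PosSemidef := by
    have h2 := Matrix.posSemidef_self_mul_conjTranspose W
    rw [hW.1] at h2
    rwa [h] at h2
  rw [psqrt, dif_pos hV]
  have e : (hV.1.eigenvectorUnitary : Matrix n n ℂ) *
      Matrix.diagonal ((↑) ∘ Real.sqrt ∘ hV.1.eigenvalues) *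
      (star hV.1.eigenvectorUnitary : Matrix n n ℂ) = cfc Real.sqrt V := by
    rw [hV.1.cfc_eq]; rfl
  rw [e]
  open scoped MatrixOrder in
  rw [← cfcₙ_eq_cfc (f := Real.sqrt) (a := V), ← CFC.sqrt_eq_real_sqrt V hV.nonneg]
  open scoped MatrixOrder in
  exact CFC.sqrt_unique h hW.nonneg

lemma isMPInv_unique {A X Y : Matrix n n ℂ} (hX : IsMPInv A X) (hY : IsMPInv A Y) : X = Y := by
  obtain ⟨hx1, hx2, hx3, hx4⟩ := hX
  obtain ⟨hy1, hy2, hy3, hy4⟩ := hY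
  have hax : A * X = A * Y := by
    calc A * X = (A * X)ᴴ := hx3.symm
    _ = Xᴴ * Aᴴ := by rw [conjTranspose_mul]
    _ = Xᴴ * (A * Y * A)ᴴ := by rw [hy1]
    _ = Xᴴ * (Aᴴ * (A * Y)ᴴ) := by rw [conjTranspose_mul (A * Y) A]
    _ = (Xᴴ * Aᴴ) * (A * Y)ᴴ := by rw [mul_assoc]
    _ = (A * X)ᴴ * (A * Y)ᴴ := by rw [conjTranspose_mul A X]
    _ = (A * X) * (A * Y) := by rw [hx3, hy3]
    _ = (A * X * A) * Y := by simp only [mul_assoc]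
    _ = A * Y := by rw [hx1]
  have hxa : X * A = Y * A := by
    calc X * A = (X * A)ᴴ := hx4.symm
    _ = Aᴴ * Xᴴ := by rw [conjTranspose_mul]
    _ = (A * Y * A)ᴴ * Xᴴ := by rw [hy1]
    _ = ((Y * A)ᴴ * Aᴴ) * Xᴴ := by rw [mul_assoc, conjTranspose_mul A (Y * A)]
    _ = (Y * A)ᴴ * (Aᴴ * Xᴴ) := by rw [mul_assoc]
    _ = (Y * A)ᴴ * (X * A)ᴴ := by rw [conjTranspose_mul X A]
    _ = (Y * A) * (X * A) := by rw [hx4, hy4]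
    _ = Y * (A * X * A) := by simp only [mul_assoc]
    _ = Y * A := by rw [hx1]
  calc X = X * A * X := hx2.symm
  _ = Y * A * X := by rw [hxa]
  _ = Y * (A * X) := by rw [mul_assoc]
  _ = Y * (A * Y) := by rw [hax]
  _ = Y * A * Y := by rw [mul_assoc]
  _ = Y := hy2

lemma isMPInv_cfc_inv {A : Matrix n n ℂ} (hA : A.PosSemidef) :
    IsMPInv A (cfc (fun x : ℝ => x⁻¹) A) := by
  have h1 : A * cfc (fun x : ℝ => x⁻¹) A = cfc chi A := cfc_mul_left hA _ _ pw_id_inv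
  have h2 : cfc (fun x : ℝ => x⁻¹) A * A = cfc chi A := cfc_mul_right hA _ _ pw_inv_id
  refine ⟨?_, ?_, ?_, ?_⟩
  · rw [h1]
    have h3 := cfc_mul_right hA chi (fun x : ℝ => x) pw_chi_id
    rw [h3]
    exact cfc_id_eq hA.1
  · rw [h2]
    exact cfc_mul_cfc hA _ _ _ pw_chi_inv
  · rw [h1]
    exact cfc_herm chi A
  · rw [h2]
    exact cfc_herm chi A

lemma toEuclideanLin_mul (M N : Matrix n n ℂ) :
    toEuclideanLin (M * N) = (toEuclideanLin M).comp (toEuclideanLin N) := by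
  apply LinearMap.ext
  intro x
  simp [Matrix.toEuclideanLin_apply, Matrix.mulVec_mulVec]

lemma ker_toEuclideanLin_eq {M N U V : Matrix n n ℂ} (hMN : M = U * N) (hNM : N = V * M) :
    LinearMap.ker (toEuclideanLin M) = LinearMap.ker (toEuclideanLin N) := by
  apply le_antisymm
  · intro x hx
    rw [LinearMap.mem_ker] at hx ⊢
    rw [hNM, toEuclideanLin_mul, LinearMap.comp_apply, hx, map_zero]
  · intro x hx
    rw [LinearMap.mem_ker] at hx ⊢
    rw [hMN, toEuclideanLin_mul, LinearMap.comp_apply, hx, map_zero]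

lemma range_toEuclideanLin_herm {M : Matrix n n ℂ} (hM : M.IsHermitian) :
    LinearMap.range (toEuclideanLin M) = (LinearMap.ker (toEuclideanLin M))ᗮ := by
  have hsym := (Matrix.isHermitian_iff_isSymmetric).mp hM
  set T := toEuclideanLin M with hT
  have h1 : (LinearMap.range T)ᗮ = LinearMap.ker T := by
    ext x
    rw [Submodule.mem_orthogonal, LinearMap.mem_ker]
    constructor
    · intro h
      have h2 := h (T (T x)) (LinearMap.mem_range_self _ _)
      rw [hsym (T x) x] at h2
      exact inner_self_eq_zero.mp h2
    · rintro h u ⟨y, rfl⟩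
      rw [hsym y x, h, inner_zero_right]
  conv_lhs => rw [← Submodule.orthogonal_orthogonal (LinearMap.range T)]
  rw [h1]

lemma proj_eq_of_range_eq {P₁ P₂ : Matrix n n ℂ} (h₁ : P₁.IsHermitian) (i₁ : P₁ * P₁ = P₁)
    (h₂ : P₂.IsHermitian) (i₂ : P₂ * P₂ = P₂)
    (hr : LinearMap.range (toEuclideanLin P₁) = LinearMap.range (toEuclideanLin P₂)) :
    P₁ = P₂ := by
  have key : ∀ (R S : Matrix n n ℂ), R * R = R →
      LinearMap.range (toEuclideanLin S) ≤ LinearMap.range (toEuclideanLin R) → R * S = S := by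
    intro R S hRR hle
    apply Matrix.toEuclideanLin.injective
    rw [toEuclideanLin_mul]
    apply LinearMap.ext
    intro x
    obtain ⟨y, hy⟩ := hle (LinearMap.mem_range_self _ x)
    have hR : (toEuclideanLin R).comp (toEuclideanLin R) = toEuclideanLin R := by
      rw [← toEuclideanLin_mul, hRR]
    calc toEuclideanLin R ((toEuclideanLin S) x) = toEuclideanLin R (toEuclideanLin R y) := by
          rw [hy]
    _ = (toEuclideanLin R).comp (toEuclideanLin R) y := rfl
    _ = toEuclideanLin R y := by rw [hR]
    _ = toEuclideanLin S x := hy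
  have h12 : P₁ * P₂ = P₂ := key _ _ i₁ (le_of_eq hr.symm)
  have h21 : P₂ * P₁ = P₁ := key _ _ i₂ (le_of_eq hr)
  calc P₁ = P₁ᴴ := h₁.symm
  _ = (P₂ * P₁)ᴴ := by rw [h21]
  _ = P₁ᴴ * P₂ᴴ := by rw [conjTranspose_mul]
  _ = P₁ * P₂ := by rw [h₁, h₂]
  _ = P₂ := h12

lemma pow_intertwine (C : Matrix n n ℂ) (k : ℕ) : (C * Cᴴ) ^ k * C = C * (Cᴴ * C) ^ k := by
  induction k with
  | zero => simp
  | succ k ih =>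
    rw [pow_succ, pow_succ]
    calc (C * Cᴴ) ^ k * (C * Cᴴ) * C = (C * Cᴴ) ^ k * (C * (Cᴴ * C)) := by
          simp only [mul_assoc]
    _ = ((C * Cᴴ) ^ k * C) * (Cᴴ * C) := by simp only [mul_assoc]
    _ = C * (Cᴴ * C) ^ k * (Cᴴ * C) := by rw [ih]
    _ = C * ((Cᴴ * C) ^ k * (Cᴴ * C)) := by simp only [mul_assoc]

lemma aeval_intertwine (C : Matrix n n ℂ) (q : Polynomial ℝ) :
    (Polynomial.aeval (C * Cᴴ)) q * C = C * (Polynomial.aeval (Cᴴ * C)) q := by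
  induction q using Polynomial.induction_on with
  | C r =>
    simp only [Polynomial.aeval_C, Algebra.algebraMap_eq_smul_one]
    rw [smul_mul_assoc, one_mul, mul_smul_comm, mul_one]
  | add p q hp hq => rw [map_add, map_add, add_mul, mul_add, hp, hq]
  | monomial k r ih =>
    simp only [_root_.map_mul, Polynomial.aeval_C, _root_.map_pow, Polynomial.aeval_X,
      Algebra.algebraMap_eq_smul_one]
    simp only [smul_mul_assoc, one_mul, mul_smul_comm, pow_intertwine]

lemma cfc_intertwine (C : Matrix n n ℂ) (f : ℝ → ℝ) :
    cfc f (C * Cᴴ) * C = C * cfc f (Cᴴ * C) := by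
  classical
  have hfin : ((spectrum ℝ (C * Cᴴ)) ∪ (spectrum ℝ (Cᴴ * C))).Finite :=
    (Matrix.finite_real_spectrum).union (Matrix.finite_real_spectrum)
  set s : Finset ℝ := hfin.toFinset with hs
  set q : Polynomial ℝ := Lagrange.interpolate s id f with hq
  have hnode : ∀ x ∈ s, q.eval x = f x := by
    intro x hx
    exact Lagrange.eval_interpolate_at_node f (Set.injOn_id _) hx
  have h1 : cfc f (C * Cᴴ) = (Polynomial.aeval (C * Cᴴ)) q := by
    rw [← cfc_polynomial q (C * Cᴴ) (Matrix.posSemidef_self_mul_conjTranspose C).1.isSelfAdjoint]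
    refine cfc_congr fun x hx => ?_
    exact (hnode x (by rw [hs, Set.Finite.mem_toFinset]; exact Or.inl hx)).symm
  have h2 : cfc f (Cᴴ * C) = (Polynomial.aeval (Cᴴ * C)) q := by
    rw [← cfc_polynomial q (Cᴴ * C) (Matrix.posSemidef_conjTranspose_mul_self C).1.isSelfAdjoint]
    refine cfc_congr fun x hx => ?_
    exact (hnode x (by rw [hs, Set.Finite.mem_toFinset]; exact Or.inr hx)).symm
  rw [h1, h2, aeval_intertwine]

lemma mul_suppProj (C : Matrix n n ℂ) : C * cfc chi (Cᴴ * C) = C := by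
  have hN : (Cᴴ * C).PosSemidef := Matrix.posSemidef_conjTranspose_mul_self C
  have hPiH : (cfc chi (Cᴴ * C))ᴴ = cfc chi (Cᴴ * C) := cfc_herm chi _
  have hPiN : cfc chi (Cᴴ * C) * (Cᴴ * C) = Cᴴ * C := by
    rw [cfc_mul_right hN chi (fun x : ℝ => x) pw_chi_id]
    exact cfc_id_eq hN.1
  have hNPi : (Cᴴ * C) * cfc chi (Cᴴ * C) = Cᴴ * C := by
    rw [cfc_mul_left hN chi (fun x : ℝ => x) pw_id_chi]
    exact cfc_id_eq hN.1
  have key : (C * cfc chi (Cᴴ * C) - C)ᴴ * (C * cfc chi (Cᴴ * C) - C) = 0 := by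
    rw [conjTranspose_sub, conjTranspose_mul, hPiH]
    rw [sub_mul, mul_sub, mul_sub]
    have e1 : cfc chi (Cᴴ * C) * Cᴴ * (C * cfc chi (Cᴴ * C)) = Cᴴ * C := by
      calc cfc chi (Cᴴ * C) * Cᴴ * (C * cfc chi (Cᴴ * C))
          = (cfc chi (Cᴴ * C) * (Cᴴ * C)) * cfc chi (Cᴴ * C) := by simp only [mul_assoc]
      _ = (Cᴴ * C) * cfc chi (Cᴴ * C) := by rw [hPiN]
      _ = Cᴴ * C := hNPi
    have e2 : cfc chi (Cᴴ * C) * Cᴴ * C = Cᴴ * C := by rw [mul_assoc]; exact hPiN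
    have e3 : Cᴴ * (C * cfc chi (Cᴴ * C)) = Cᴴ * C := by rw [← mul_assoc]; exact hNPi
    rw [e1, e2, e3]
    simp
  have h0 := Matrix.conjTranspose_mul_self_eq_zero.mp key
  exact sub_eq_zero.mp h0

lemma core (a a' b b' P Q S S' T T' NI Pi : Matrix n n ℂ)
    (haH : aᴴ = a) (hSH : Sᴴ = S) (hb'H : b'ᴴ = b') (hTH : Tᴴ = T)
    (hPH : Pᴴ = P) (hQH : Qᴴ = Q)
    (haa' : a * a' = P) (ha'a : a' * a = P) (hbb' : b * b' = Q) (hb'b : b' * b = Q)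
    (hPa' : P * a' = a') (ha'P : a' * P = a') (hQb : Q * b = b) (hbQ : b * Q = b)
    (hPP : P * P = P) (hQQ : Q * Q = Q) (hcomm : P * Q = Q * P)
    (h1 : S = a' * (b * (b * (a' * S'))))
    (h2 : T = b * (a' * (a' * (b * T'))))
    (h3 : ∀ w, b * (a' * (S' * w)) = T' * (b * (a' * w)))
    (h4 : ∀ w, a' * (b * (T' * w)) = S' * (a' * (b * w)))
    (h5 : ∀ w, T' * (T' * w) = NI * w)
    (h6 : ∀ w, NI * (b * (a' * (a' * (b * w)))) = Pi * w)
    (h7 : ∀ w, a' * (b * (Pi * w)) = a' * (b * w)) :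
    IsMPInv (a * (S * a)) (b' * (T * b')) := by
  have paa' : ∀ w, a * (a' * w) = P * w := fun w => by rw [← mul_assoc, haa']
  have pa'a : ∀ w, a' * (a * w) = P * w := fun w => by rw [← mul_assoc, ha'a]
  have pb'b : ∀ w, b' * (b * w) = Q * w := fun w => by rw [← mul_assoc, hb'b]
  have pPa' : ∀ w, P * (a' * w) = a' * w := fun w => by rw [← mul_assoc, hPa']
  have pQb : ∀ w, Q * (b * w) = b * w := fun w => by rw [← mul_assoc, hQb]
  have pbQ : ∀ w, b * (Q * w) = b * w := fun w => by rw [← mul_assoc, hbQ]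
  have pPP : ∀ w, P * (P * w) = P * w := fun w => by rw [← mul_assoc, hPP]
  have pQQ : ∀ w, Q * (Q * w) = Q * w := fun w => by rw [← mul_assoc, hQQ]
  have pc1 : ∀ w, P * (Q * w) = Q * (P * w) := fun w => by rw [← mul_assoc, hcomm, mul_assoc]
  have pc2 : ∀ w, Q * (P * w) = P * (Q * w) := fun w => (pc1 w).symm
  have hXc : a * (S * a) = P * (b * (T' * (b * P))) := by
    rw [h1]
    simp only [mul_assoc]
    rw [h3 a, ha'a, paa']
  have hYc : b' * (T * b') = Q * (a' * (S' * (a' * Q))) := by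
    rw [h2]
    simp only [mul_assoc]
    rw [pb'b (a' * (a' * (b * (T' * b')))), h4 b', hbb']
  have c1 : (a * (S * a)) * (b' * (T * b')) = P * Q := by
    simp only [mul_assoc]
    rw [h1]
    simp only [mul_assoc]
    rw [h3 (a * (b' * (T * b')))]
    rw [pa'a (b' * (T * b'))]
    rw [h2]
    simp only [mul_assoc]
    rw [pb'b (a' * (a' * (b * (T' * b'))))]
    rw [pc1 (a' * (a' * (b * (T' * b'))))]
    rw [pbQ (P * (a' * (a' * (b * (T' * b')))))]
    rw [pPa' (a' * (b * (T' * b')))]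
    rw [h4 b']
    rw [h3 (a' * (b * b'))]
    rw [h5 (b * (a' * (a' * (b * b'))))]
    rw [h6 b']
    rw [h7 b']
    rw [hbb']
    rw [paa' Q]
  have hXH : (a * (S * a))ᴴ = a * (S * a) := by
    rw [conjTranspose_mul, conjTranspose_mul, haH, hSH, mul_assoc]
  have hYH : (b' * (T * b'))ᴴ = b' * (T * b') := by
    rw [conjTranspose_mul, conjTranspose_mul, hb'H, hTH, mul_assoc]
  have c2 : (b' * (T * b')) * (a * (S * a)) = P * Q := by
    calc (b' * (T * b')) * (a * (S * a))
        = ((a * (S * a))ᴴ * (b' * (T * b'))ᴴ)ᴴ := by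
          rw [← conjTranspose_mul, conjTranspose_conjTranspose]
    _ = ((a * (S * a)) * (b' * (T * b')))ᴴ := by rw [hXH, hYH]
    _ = (P * Q)ᴴ := by rw [c1]
    _ = Qᴴ * Pᴴ := by rw [conjTranspose_mul]
    _ = P * Q := by rw [hPH, hQH, ← hcomm]
  have c3 : (P * Q) * (a * (S * a)) = a * (S * a) := by
    rw [hXc]
    simp only [mul_assoc]
    rw [pc2 (b * (T' * (b * P)))]
    rw [pPP (Q * (b * (T' * (b * P))))]
    rw [pQb (T' * (b * P))]
  have c5 : (P * Q) * (b' * (T * b')) = b' * (T * b') := by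
    rw [hYc]
    simp only [mul_assoc]
    rw [pQQ (a' * (S' * (a' * Q)))]
    rw [pc1 (a' * (S' * (a' * Q)))]
    rw [pPa' (S' * (a' * Q))]
  refine ⟨?_, ?_, ?_, ?_⟩
  · rw [c1]; exact c3
  · rw [c2]; exact c5
  · rw [c1, conjTranspose_mul, hPH, hQH, ← hcomm]
  · rw [c2, conjTranspose_mul, hPH, hQH, ← hcomm]


theorem main (A B Ap Bp PiA PiB : Matrix n n ℂ) (hA : A.PosSemidef) (hB : B.PosSemidef)
    (hAp : IsMPInv A Ap) (hBp : IsMPInv B Bp)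
    (hAherm : PiA.IsHermitian) (hAidem : PiA * PiA = PiA)
    (hArange : LinearMap.range (Matrix.toEuclideanLin PiA) = msupp A)
    (hBherm : PiB.IsHermitian) (hBidem : PiB * PiB = PiB)
    (hBrange : LinearMap.range (Matrix.toEuclideanLin PiB) = msupp B)
    (hcomm : PiA * PiB = PiB * PiA) :
    IsMPInv (geoMean A Ap B) (geoMean Bp B Ap) := by
  have hApeq : Ap = cfc (fun x : ℝ => x⁻¹) A := isMPInv_unique hAp (isMPInv_cfc_inv hA)
  have hBpeq : Bp = cfc (fun x : ℝ => x⁻¹) B := isMPInv_unique hBp (isMPInv_cfc_inv hB)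
  -- identify the support projections with cfc chi
  have hPA : PiA = cfc chi A := by
    refine proj_eq_of_range_eq hAherm hAidem (cfc_herm chi A)
      (cfc_mul_cfc hA chi chi chi pw_chi_chi) ?_
    rw [hArange, range_toEuclideanLin_herm (cfc_herm chi A)]
    have hker : LinearMap.ker (toEuclideanLin (cfc chi A)) = LinearMap.ker (toEuclideanLin A) := by
      refine ker_toEuclideanLin_eq (U := cfc (fun x : ℝ => x⁻¹) A) (V := A) ?_ ?_
      · exact (cfc_mul_right hA _ chi pw_inv_id).symm
      · have h := cfc_mul_left hA chi (fun x : ℝ => x) pw_id_chi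
        rw [cfc_id_eq hA.1] at h
        exact h.symm
    rw [hker]
    rfl
  have hQB : PiB = cfc chi B := by
    refine proj_eq_of_range_eq hBherm hBidem (cfc_herm chi B)
      (cfc_mul_cfc hB chi chi chi pw_chi_chi) ?_
    rw [hBrange, range_toEuclideanLin_herm (cfc_herm chi B)]
    have hker : LinearMap.ker (toEuclideanLin (cfc chi B)) = LinearMap.ker (toEuclideanLin B) := by
      refine ker_toEuclideanLin_eq (U := cfc (fun x : ℝ => x⁻¹) B) (V := B) ?_ ?_
      · exact (cfc_mul_right hB _ chi pw_inv_id).symm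
      · have h := cfc_mul_left hB chi (fun x : ℝ => x) pw_id_chi
        rw [cfc_id_eq hB.1] at h
        exact h.symm
    rw [hker]
    rfl
  -- package A
  have haH : (cfc Real.sqrt A)ᴴ = cfc Real.sqrt A := cfc_herm _ _
  have ha'H : (cfc gg A)ᴴ = cfc gg A := cfc_herm _ _
  have hbH : (cfc Real.sqrt B)ᴴ = cfc Real.sqrt B := cfc_herm _ _
  have hb'H : (cfc gg B)ᴴ = cfc gg B := cfc_herm _ _
  have haa : cfc Real.sqrt A * cfc Real.sqrt A = A := by
    rw [cfc_mul_cfc hA _ _ (fun x : ℝ => x) pw_sqrt_sqrt]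
    exact cfc_id_eq hA.1
  have hbb : cfc Real.sqrt B * cfc Real.sqrt B = B := by
    rw [cfc_mul_cfc hB _ _ (fun x : ℝ => x) pw_sqrt_sqrt]
    exact cfc_id_eq hB.1
  have ha'a' : cfc gg A * cfc gg A = Ap := by
    rw [cfc_mul_cfc hA _ _ _ pw_gg_gg]
    exact hApeq.symm
  have hb'b' : cfc gg B * cfc gg B = Bp := by
    rw [cfc_mul_cfc hB _ _ _ pw_gg_gg]
    exact hBpeq.symm
  have haa' : cfc Real.sqrt A * cfc gg A = PiA := by
    rw [cfc_mul_cfc hA _ _ _ pw_sqrt_gg, hPA]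
  have ha'a : cfc gg A * cfc Real.sqrt A = PiA := by
    rw [cfc_mul_cfc hA _ _ _ pw_gg_sqrt, hPA]
  have hbb' : cfc Real.sqrt B * cfc gg B = PiB := by
    rw [cfc_mul_cfc hB _ _ _ pw_sqrt_gg, hQB]
  have hb'b : cfc gg B * cfc Real.sqrt B = PiB := by
    rw [cfc_mul_cfc hB _ _ _ pw_gg_sqrt, hQB]
  have hPa' : PiA * cfc gg A = cfc gg A := by
    rw [hPA]; exact cfc_mul_cfc hA _ _ _ pw_chi_gg
  have ha'P : cfc gg A * PiA = cfc gg A := by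
    rw [hPA]; exact cfc_mul_cfc hA _ _ _ pw_gg_chi
  have hQb : PiB * cfc Real.sqrt B = cfc Real.sqrt B := by
    rw [hQB]; exact cfc_mul_cfc hB _ _ _ pw_chi_sqrt
  have hbQ : cfc Real.sqrt B * PiB = cfc Real.sqrt B := by
    rw [hQB]; exact cfc_mul_cfc hB _ _ _ pw_sqrt_chi
  -- psqrt identifications
  have hpsA : psqrt A = cfc Real.sqrt A :=
    psqrt_unique (cfc_posSemidef hA.1 _ (fun x _ => Real.sqrt_nonneg x)) haa
  have hpsB : psqrt B = cfc Real.sqrt B :=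
    psqrt_unique (cfc_posSemidef hB.1 _ (fun x _ => Real.sqrt_nonneg x)) hbb
  have hpsAp : psqrt Ap = cfc gg A :=
    psqrt_unique (cfc_posSemidef hA.1 _ (fun x _ => inv_nonneg.mpr (Real.sqrt_nonneg x))) ha'a'
  have hpsBp : psqrt Bp = cfc gg B :=
    psqrt_unique (cfc_posSemidef hB.1 _ (fun x _ => inv_nonneg.mpr (Real.sqrt_nonneg x))) hb'b'
  -- the mixed object C and its two squares
  have hCH : (cfc gg A * cfc Real.sqrt B)ᴴ = cfc Real.sqrt B * cfc gg A := by
    rw [conjTranspose_mul, hbH, ha'H]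
  have hMm : ((cfc gg A * cfc Real.sqrt B) * (cfc gg A * cfc Real.sqrt B)ᴴ).PosSemidef :=
    Matrix.posSemidef_self_mul_conjTranspose _
  have hNm : ((cfc gg A * cfc Real.sqrt B)ᴴ * (cfc gg A * cfc Real.sqrt B)).PosSemidef :=
    Matrix.posSemidef_conjTranspose_mul_self _
  -- S, T, and friends
  have hSH : (cfc Real.sqrt ((cfc gg A * cfc Real.sqrt B) * (cfc gg A * cfc Real.sqrt B)ᴴ))ᴴ
      = cfc Real.sqrt ((cfc gg A * cfc Real.sqrt B) * (cfc gg A * cfc Real.sqrt B)ᴴ) :=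
    cfc_herm _ _
  have hTH : (cfc Real.sqrt ((cfc gg A * cfc Real.sqrt B)ᴴ * (cfc gg A * cfc Real.sqrt B)))ᴴ
      = cfc Real.sqrt ((cfc gg A * cfc Real.sqrt B)ᴴ * (cfc gg A * cfc Real.sqrt B)) :=
    cfc_herm _ _
  have hMmS : ((cfc gg A * cfc Real.sqrt B) * (cfc gg A * cfc Real.sqrt B)ᴴ)
      * cfc gg ((cfc gg A * cfc Real.sqrt B) * (cfc gg A * cfc Real.sqrt B)ᴴ)
      = cfc Real.sqrt ((cfc gg A * cfc Real.sqrt B) * (cfc gg A * cfc Real.sqrt B)ᴴ) :=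
    cfc_mul_left hMm gg Real.sqrt pw_id_gg
  have hNmT : ((cfc gg A * cfc Real.sqrt B)ᴴ * (cfc gg A * cfc Real.sqrt B))
      * cfc gg ((cfc gg A * cfc Real.sqrt B)ᴴ * (cfc gg A * cfc Real.sqrt B))
      = cfc Real.sqrt ((cfc gg A * cfc Real.sqrt B)ᴴ * (cfc gg A * cfc Real.sqrt B)) :=
    cfc_mul_left hNm gg Real.sqrt pw_id_gg
  have h1 : cfc Real.sqrt ((cfc gg A * cfc Real.sqrt B) * (cfc gg A * cfc Real.sqrt B)ᴴ)
      = cfc gg A * (cfc Real.sqrt B * (cfc Real.sqrt B * (cfc gg A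
        * cfc gg ((cfc gg A * cfc Real.sqrt B) * (cfc gg A * cfc Real.sqrt B)ᴴ)))) := by
    rw [← hMmS]
    nth_rewrite 1 [hCH]
    simp only [mul_assoc]
  have h2 : cfc Real.sqrt ((cfc gg A * cfc Real.sqrt B)ᴴ * (cfc gg A * cfc Real.sqrt B))
      = cfc Real.sqrt B * (cfc gg A * (cfc gg A * (cfc Real.sqrt B
        * cfc gg ((cfc gg A * cfc Real.sqrt B)ᴴ * (cfc gg A * cfc Real.sqrt B))))) := by
    rw [← hNmT]
    nth_rewrite 1 [hCH]
    simp only [mul_assoc]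
  have hint1 : cfc gg ((cfc gg A * cfc Real.sqrt B)ᴴ * (cfc gg A * cfc Real.sqrt B))
      * (cfc gg A * cfc Real.sqrt B)ᴴ
      = (cfc gg A * cfc Real.sqrt B)ᴴ
        * cfc gg ((cfc gg A * cfc Real.sqrt B) * (cfc gg A * cfc Real.sqrt B)ᴴ) := by
    have h := cfc_intertwine (cfc gg A * cfc Real.sqrt B)ᴴ gg
    rwa [conjTranspose_conjTranspose] at h
  have hint2 : cfc gg ((cfc gg A * cfc Real.sqrt B) * (cfc gg A * cfc Real.sqrt B)ᴴ)
      * (cfc gg A * cfc Real.sqrt B)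
      = (cfc gg A * cfc Real.sqrt B)
        * cfc gg ((cfc gg A * cfc Real.sqrt B)ᴴ * (cfc gg A * cfc Real.sqrt B)) :=
    cfc_intertwine (cfc gg A * cfc Real.sqrt B) gg
  have h3 : ∀ w, cfc Real.sqrt B * (cfc gg A
      * (cfc gg ((cfc gg A * cfc Real.sqrt B) * (cfc gg A * cfc Real.sqrt B)ᴴ) * w))
      = cfc gg ((cfc gg A * cfc Real.sqrt B)ᴴ * (cfc gg A * cfc Real.sqrt B))
        * (cfc Real.sqrt B * (cfc gg A * w)) := by
    intro w
    calc cfc Real.sqrt B * (cfc gg A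
        * (cfc gg ((cfc gg A * cfc Real.sqrt B) * (cfc gg A * cfc Real.sqrt B)ᴴ) * w))
        = ((cfc gg A * cfc Real.sqrt B)ᴴ
            * cfc gg ((cfc gg A * cfc Real.sqrt B) * (cfc gg A * cfc Real.sqrt B)ᴴ)) * w := by
          rw [hCH]; simp only [mul_assoc]
    _ = (cfc gg ((cfc gg A * cfc Real.sqrt B)ᴴ * (cfc gg A * cfc Real.sqrt B))
          * (cfc gg A * cfc Real.sqrt B)ᴴ) * w := by rw [hint1]
    _ = cfc gg ((cfc gg A * cfc Real.sqrt B)ᴴ * (cfc gg A * cfc Real.sqrt B))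
          * (cfc Real.sqrt B * (cfc gg A * w)) := by rw [hCH]; simp only [mul_assoc]
  have h4 : ∀ w, cfc gg A * (cfc Real.sqrt B
      * (cfc gg ((cfc gg A * cfc Real.sqrt B)ᴴ * (cfc gg A * cfc Real.sqrt B)) * w))
      = cfc gg ((cfc gg A * cfc Real.sqrt B) * (cfc gg A * cfc Real.sqrt B)ᴴ)
        * (cfc gg A * (cfc Real.sqrt B * w)) := by
    intro w
    calc cfc gg A * (cfc Real.sqrt B
        * (cfc gg ((cfc gg A * cfc Real.sqrt B)ᴴ * (cfc gg A * cfc Real.sqrt B)) * w))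
        = ((cfc gg A * cfc Real.sqrt B)
            * cfc gg ((cfc gg A * cfc Real.sqrt B)ᴴ * (cfc gg A * cfc Real.sqrt B))) * w := by
          simp only [mul_assoc]
    _ = (cfc gg ((cfc gg A * cfc Real.sqrt B) * (cfc gg A * cfc Real.sqrt B)ᴴ)
          * (cfc gg A * cfc Real.sqrt B)) * w := by rw [hint2]
    _ = cfc gg ((cfc gg A * cfc Real.sqrt B) * (cfc gg A * cfc Real.sqrt B)ᴴ)
          * (cfc gg A * (cfc Real.sqrt B * w)) := by simp only [mul_assoc]
  have htt : cfc gg ((cfc gg A * cfc Real.sqrt B)ᴴ * (cfc gg A * cfc Real.sqrt B))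
      * cfc gg ((cfc gg A * cfc Real.sqrt B)ᴴ * (cfc gg A * cfc Real.sqrt B))
      = cfc (fun x : ℝ => x⁻¹) ((cfc gg A * cfc Real.sqrt B)ᴴ * (cfc gg A * cfc Real.sqrt B)) :=
    cfc_mul_cfc hNm _ _ _ pw_gg_gg
  have h5 : ∀ w, cfc gg ((cfc gg A * cfc Real.sqrt B)ᴴ * (cfc gg A * cfc Real.sqrt B))
      * (cfc gg ((cfc gg A * cfc Real.sqrt B)ᴴ * (cfc gg A * cfc Real.sqrt B)) * w)
      = cfc (fun x : ℝ => x⁻¹) ((cfc gg A * cfc Real.sqrt B)ᴴ * (cfc gg A * cfc Real.sqrt B)) * w := by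
    intro w
    rw [← mul_assoc, htt]
  have hNIN : cfc (fun x : ℝ => x⁻¹) ((cfc gg A * cfc Real.sqrt B)ᴴ * (cfc gg A * cfc Real.sqrt B))
      * ((cfc gg A * cfc Real.sqrt B)ᴴ * (cfc gg A * cfc Real.sqrt B))
      = cfc chi ((cfc gg A * cfc Real.sqrt B)ᴴ * (cfc gg A * cfc Real.sqrt B)) :=
    cfc_mul_right hNm _ chi pw_inv_id
  have h6 : ∀ w, cfc (fun x : ℝ => x⁻¹) ((cfc gg A * cfc Real.sqrt B)ᴴ * (cfc gg A * cfc Real.sqrt B))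
      * (cfc Real.sqrt B * (cfc gg A * (cfc gg A * (cfc Real.sqrt B * w))))
      = cfc chi ((cfc gg A * cfc Real.sqrt B)ᴴ * (cfc gg A * cfc Real.sqrt B)) * w := by
    intro w
    calc cfc (fun x : ℝ => x⁻¹) ((cfc gg A * cfc Real.sqrt B)ᴴ * (cfc gg A * cfc Real.sqrt B))
        * (cfc Real.sqrt B * (cfc gg A * (cfc gg A * (cfc Real.sqrt B * w))))
        = (cfc (fun x : ℝ => x⁻¹) ((cfc gg A * cfc Real.sqrt B)ᴴ * (cfc gg A * cfc Real.sqrt B))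
            * ((cfc gg A * cfc Real.sqrt B)ᴴ * (cfc gg A * cfc Real.sqrt B))) * w := by
          rw [hCH]; simp only [mul_assoc]
    _ = cfc chi ((cfc gg A * cfc Real.sqrt B)ᴴ * (cfc gg A * cfc Real.sqrt B)) * w := by
          rw [hNIN]
  have hCPi : (cfc gg A * cfc Real.sqrt B)
      * cfc chi ((cfc gg A * cfc Real.sqrt B)ᴴ * (cfc gg A * cfc Real.sqrt B))
      = cfc gg A * cfc Real.sqrt B := mul_suppProj _
  have h7 : ∀ w, cfc gg A * (cfc Real.sqrt B
      * (cfc chi ((cfc gg A * cfc Real.sqrt B)ᴴ * (cfc gg A * cfc Real.sqrt B)) * w))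
      = cfc gg A * (cfc Real.sqrt B * w) := by
    intro w
    calc cfc gg A * (cfc Real.sqrt B
        * (cfc chi ((cfc gg A * cfc Real.sqrt B)ᴴ * (cfc gg A * cfc Real.sqrt B)) * w))
        = ((cfc gg A * cfc Real.sqrt B)
            * cfc chi ((cfc gg A * cfc Real.sqrt B)ᴴ * (cfc gg A * cfc Real.sqrt B))) * w := by
          simp only [mul_assoc]
    _ = (cfc gg A * cfc Real.sqrt B) * w := by rw [hCPi]
    _ = cfc gg A * (cfc Real.sqrt B * w) := by simp only [mul_assoc]
  -- identify the geometric means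
  have hSS : cfc Real.sqrt ((cfc gg A * cfc Real.sqrt B) * (cfc gg A * cfc Real.sqrt B)ᴴ)
      * cfc Real.sqrt ((cfc gg A * cfc Real.sqrt B) * (cfc gg A * cfc Real.sqrt B)ᴴ)
      = (cfc gg A * cfc Real.sqrt B) * (cfc gg A * cfc Real.sqrt B)ᴴ := by
    rw [cfc_mul_cfc hMm _ _ (fun x : ℝ => x) pw_sqrt_sqrt]
    exact cfc_id_eq hMm.1
  have hTT : cfc Real.sqrt ((cfc gg A * cfc Real.sqrt B)ᴴ * (cfc gg A * cfc Real.sqrt B))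
      * cfc Real.sqrt ((cfc gg A * cfc Real.sqrt B)ᴴ * (cfc gg A * cfc Real.sqrt B))
      = (cfc gg A * cfc Real.sqrt B)ᴴ * (cfc gg A * cfc Real.sqrt B) := by
    rw [cfc_mul_cfc hNm _ _ (fun x : ℝ => x) pw_sqrt_sqrt]
    exact cfc_id_eq hNm.1
  have hinnerA : (cfc gg A * cfc Real.sqrt B) * (cfc gg A * cfc Real.sqrt B)ᴴ
      = cfc gg A * B * cfc gg A := by
    rw [hCH]
    calc (cfc gg A * cfc Real.sqrt B) * (cfc Real.sqrt B * cfc gg A)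
        = cfc gg A * (cfc Real.sqrt B * cfc Real.sqrt B) * cfc gg A := by
          simp only [mul_assoc]
    _ = cfc gg A * B * cfc gg A := by rw [hbb]
  have hinnerB : (cfc gg A * cfc Real.sqrt B)ᴴ * (cfc gg A * cfc Real.sqrt B)
      = cfc Real.sqrt B * Ap * cfc Real.sqrt B := by
    rw [hCH]
    calc (cfc Real.sqrt B * cfc gg A) * (cfc gg A * cfc Real.sqrt B)
        = cfc Real.sqrt B * (cfc gg A * cfc gg A) * cfc Real.sqrt B := by
          simp only [mul_assoc]
    _ = cfc Real.sqrt B * Ap * cfc Real.sqrt B := by rw [ha'a']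
  have hXeq : geoMean A Ap B = cfc Real.sqrt A
      * (cfc Real.sqrt ((cfc gg A * cfc Real.sqrt B) * (cfc gg A * cfc Real.sqrt B)ᴴ)
        * cfc Real.sqrt A) := by
    rw [geoMean, hpsA, hpsAp, ← hinnerA,
      psqrt_unique (cfc_posSemidef hMm.1 _ (fun x _ => Real.sqrt_nonneg x)) hSS, mul_assoc]
  have hYeq : geoMean Bp B Ap = cfc gg B
      * (cfc Real.sqrt ((cfc gg A * cfc Real.sqrt B)ᴴ * (cfc gg A * cfc Real.sqrt B))
        * cfc gg B) := by
    rw [geoMean, hpsBp, hpsB, ← hinnerB,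
      psqrt_unique (cfc_posSemidef hNm.1 _ (fun x _ => Real.sqrt_nonneg x)) hTT, mul_assoc]
  rw [hXeq, hYeq]
  exact core _ _ _ _ _ _ _ _ _ _ _ _ haH hSH hb'H hTH hAherm hBherm haa' ha'a hbb' hb'b
    hPa' ha'P hQb hbQ hAidem hBidem hcomm h1 h2 h3 h4 h5 h6 h7

end GeoMeanAux

/-- If the support projections of A and B commute, then M(B⁺,A⁺) is the
Moore–Penrose pseudoinverse of M(A,B). -/
theorem geoMean_inv_isMPInv_of_proj_commute
    {n : Type*} [Fintype n] [DecidableEq n]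
    (A B Ap Bp PiA PiB : Matrix n n ℂ) (hA : A.PosSemidef) (hB : B.PosSemidef)
    (hAp : IsMPInv A Ap) (hBp : IsMPInv B Bp)
    (hAherm : PiA.IsHermitian) (hAidem : PiA * PiA = PiA)
    (hArange : LinearMap.range (Matrix.toEuclideanLin PiA) = msupp A)
    (hBherm : PiB.IsHermitian) (hBidem : PiB * PiB = PiB)
    (hBrange : LinearMap.range (Matrix.toEuclideanLin PiB) = msupp B)
    (hcomm : PiA * PiB = PiB * PiA) :
    IsMPInv (geoMean A Ap B) (geoMean Bp B Ap) :=
  GeoMeanAux.main A B Ap Bp PiA PiB hA hB hAp hBp hAherm hAidem hArange hBherm hBidem hBrange hcomm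
end

section
/- For positive semidefinite matrices A and B, if M(B⁺, A⁺) and M(A,B) commute, then the support projections Π_A and Π_B commute. Conversely, if Π_A and Π_B commute, then M(B⁺, A⁺) and M(A,B) commute. -/
open scoped ComplexOrder

namespace GeoAux

open Matrix Polynomial

variable {n : Type*} [Fintype n] [DecidableEq n]

/-! ### basic facts about `psqrt` -/

lemma psqrt_of {X : Matrix n n ℂ} (h : X.PosSemidef) : psqrt X =
    (h.1.eigenvectorUnitary : Matrix n n ℂ) * Matrix.diagonal ((↑) ∘ Real.sqrt ∘ h.1.eigenvalues) *
      (star h.1.eigenvectorUnitary : Matrix n n ℂ) := dif_pos h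

lemma psqrt_posSemidef {X : Matrix n n ℂ} (h : X.PosSemidef) : (psqrt X).PosSemidef := by
  rw [psqrt_of h, Matrix.star_eq_conjTranspose]
  exact (Matrix.PosSemidef.diagonal fun i => Complex.zero_le_real.mpr (Real.sqrt_nonneg _)).mul_mul_conjTranspose_same _

lemma psqrt_mul_self {X : Matrix n n ℂ} (h : X.PosSemidef) : psqrt X * psqrt X = X := by
  rw [psqrt_of h]
  conv_rhs => rw [h.1.spectral_theorem, Unitary.conjStarAlgAut_apply]
  have hu : star (h.1.eigenvectorUnitary : Matrix n n ℂ) * (h.1.eigenvectorUnitary : Matrix n n ℂ)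
      = 1 := Unitary.coe_star_mul_self _
  simp only [mul_assoc]
  rw [← mul_assoc (star (h.1.eigenvectorUnitary : Matrix n n ℂ)), hu, one_mul,
    ← mul_assoc (Matrix.diagonal _) (Matrix.diagonal _), Matrix.diagonal_mul_diagonal]
  congr 2
  congr 1
  funext i
  simp only [Function.comp_apply]
  rw [← Complex.ofReal_mul, Real.mul_self_sqrt (h.eigenvalues_nonneg i)]
  rfl

lemma psqrt_herm {X : Matrix n n ℂ} (h : X.PosSemidef) : (psqrt X)ᴴ = psqrt X :=
  (psqrt_posSemidef h).1

/-! ### polynomial functional calculus -/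

lemma commute_aeval {x z : Matrix n n ℂ} (h : Commute x z) (p : ℂ[X]) :
    Commute (aeval x p) z := by
  induction p using Polynomial.induction_on' with
  | add p q hp hq => rw [map_add]; exact hp.add_left hq
  | monomial k a =>
      rw [aeval_monomial]
      exact (Commute.mul_left (Algebra.commutes a z) (h.pow_left k))

lemma aeval_diagonal (d : n → ℂ) (p : ℂ[X]) :
    aeval (Matrix.diagonal d) p = Matrix.diagonal (fun i => p.eval (d i)) := by
  induction p using Polynomial.induction_on' with
  | add p q hp hq =>
      rw [map_add, hp, hq, diagonal_add]
      simp [eval_add]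
  | monomial k a =>
      rw [aeval_monomial, Matrix.algebraMap_eq_diagonal, diagonal_pow, diagonal_mul_diagonal]
      funext i
      simp [eval_monomial]

lemma conj_pow (U D : Matrix n n ℂ) (hU : U ∈ unitary (Matrix n n ℂ)) (k : ℕ) :
    (U * D * star U) ^ k = U * D ^ k * star U := by
  induction k with
  | zero => simpa using ((Unitary.mem_iff.mp hU).2).symm
  | succ k ih =>
      have h1 : star U * U = 1 := (Unitary.mem_iff.mp hU).1
      rw [pow_succ, ih, pow_succ]
      calc U * D ^ k * star U * (U * D * star U)
          = U * D ^ k * (star U * U) * (D * star U) := by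
            simp only [mul_assoc]
        _ = U * (D ^ k * D) * star U := by rw [h1]; simp only [mul_one, mul_assoc]

lemma aeval_conj (U D : Matrix n n ℂ) (hU : U ∈ unitary (Matrix n n ℂ)) (p : ℂ[X]) :
    aeval (U * D * star U) p = U * aeval D p * star U := by
  induction p using Polynomial.induction_on' with
  | add p q hp hq =>
      rw [map_add, map_add, hp, hq, mul_add, add_mul]
  | monomial k a =>
      rw [aeval_monomial, aeval_monomial, conj_pow U D hU k,
        Algebra.algebraMap_eq_smul_one]
      simp only [smul_mul_assoc, one_mul, mul_smul_comm]

lemma aeval_herm {M : Matrix n n ℂ} (hM : M.IsHermitian) (p : ℂ[X]) :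
    aeval M p = (hM.eigenvectorUnitary : Matrix n n ℂ) *
      Matrix.diagonal (fun i => p.eval ((hM.eigenvalues i : ℂ))) *
      (star (hM.eigenvectorUnitary : Matrix n n ℂ)) := by
  conv_lhs => rw [hM.spectral_theorem, Unitary.conjStarAlgAut_apply]
  rw [aeval_conj _ _ (hM.eigenvectorUnitary).2, aeval_diagonal]
  rfl

lemma aeval_eq_zero_of_eigs {M : Matrix n n ℂ} (hM : M.IsHermitian) (p : ℂ[X])
    (h : ∀ i, p.eval ((hM.eigenvalues i : ℂ)) = 0) : aeval M p = 0 := by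
  rw [aeval_herm hM]
  have : (Matrix.diagonal (fun i => p.eval ((hM.eigenvalues i : ℂ)))) = 0 := by
    rw [show (fun i => p.eval ((hM.eigenvalues i : ℂ))) = fun _ => 0 from funext h]
    exact Matrix.diagonal_zero
  rw [this, mul_zero, zero_mul]

lemma aeval_eq_psqrt {M : Matrix n n ℂ} (hM : M.PosSemidef) (p : ℂ[X])
    (h : ∀ i, p.eval ((hM.1.eigenvalues i : ℂ)) = ((Real.sqrt (hM.1.eigenvalues i) : ℝ) : ℂ)) :
    aeval M p = psqrt M := by
  rw [psqrt, dif_pos hM, aeval_herm hM.1]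
  have : (fun i => p.eval ((hM.1.eigenvalues i : ℂ)))
      = ((↑) ∘ Real.sqrt ∘ hM.1.eigenvalues : n → ℂ) := by
    funext i
    exact h i
  rw [this]

lemma exists_sqrt_poly {M₁ M₂ : Matrix n n ℂ} (h₁ : M₁.PosSemidef) (h₂ : M₂.PosSemidef) :
    ∃ p : ℂ[X], p.eval 0 = 0 ∧
      (∀ i, p.eval ((h₁.1.eigenvalues i : ℂ)) = ((Real.sqrt (h₁.1.eigenvalues i) : ℝ) : ℂ)) ∧
      (∀ i, p.eval ((h₂.1.eigenvalues i : ℂ)) = ((Real.sqrt (h₂.1.eigenvalues i) : ℝ) : ℂ)) := by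
  classical
  set s : Finset ℂ := insert 0 ((Finset.univ.image fun i => ((h₁.1.eigenvalues i : ℂ)))
      ∪ (Finset.univ.image fun i => ((h₂.1.eigenvalues i : ℂ)))) with hs
  set v : ℂ → ℂ := fun z => ((Real.sqrt z.re : ℝ) : ℂ) with hv
  have hinj : Set.InjOn id (s : Set ℂ) := Set.injOn_id _
  have key : ∀ z ∈ s, (Lagrange.interpolate s id v).eval z = v z := by
    intro z hz
    simpa using Lagrange.eval_interpolate_at_node v hinj hz
  refine ⟨Lagrange.interpolate s id v, ?_, ?_, ?_⟩
  · have h0 : (0 : ℂ) ∈ s := Finset.mem_insert_self _ _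
    rw [key 0 h0, hv]
    simp
  · intro i
    have hm : ((h₁.1.eigenvalues i : ℂ)) ∈ s := by
      apply Finset.mem_insert_of_mem
      exact Finset.mem_union_left _ (Finset.mem_image_of_mem _ (Finset.mem_univ i))
    rw [key _ hm, hv]
    simp
  · intro i
    have hm : ((h₂.1.eigenvalues i : ℂ)) ∈ s := by
      apply Finset.mem_insert_of_mem
      exact Finset.mem_union_right _ (Finset.mem_image_of_mem _ (Finset.mem_univ i))
    rw [key _ hm, hv]
    simp

/-! ### Moore-Penrose basics -/

omit [DecidableEq n] in
lemma mp_aux1 {A X Y : Matrix n n ℂ}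
    (h2 : X * A * X = X) (h4 : (X * A)ᴴ = X * A)
    (g1 : A * Y * A = A) (g4 : (Y * A)ᴴ = Y * A) : X = Y * A * X := by
  have e1 : Aᴴ * Xᴴ = X * A := by rw [← Matrix.conjTranspose_mul]; exact h4
  have e2 : Aᴴ = Y * A * Aᴴ := by
    conv_lhs => rw [← g1]
    rw [mul_assoc, Matrix.conjTranspose_mul, g4]
  calc X = X * A * X := h2.symm
    _ = Aᴴ * Xᴴ * X := by rw [e1]
    _ = Y * A * Aᴴ * Xᴴ * X := by conv_lhs => rw [e2]
    _ = Y * A * (X * A) * X := by rw [mul_assoc (Y * A) Aᴴ Xᴴ, e1]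
    _ = Y * A * X := by rw [mul_assoc (Y * A) (X * A) X, h2]

omit [DecidableEq n] in
lemma mp_aux2 {A X Y : Matrix n n ℂ}
    (h2 : X * A * X = X) (h3 : (A * X)ᴴ = A * X)
    (g1 : A * Y * A = A) (g3 : (A * Y)ᴴ = A * Y) : X = X * A * Y := by
  have e1 : Xᴴ * Aᴴ = A * X := by rw [← Matrix.conjTranspose_mul]; exact h3
  have e2 : Aᴴ = Aᴴ * (A * Y) := by
    conv_lhs => rw [← g1]
    rw [Matrix.conjTranspose_mul, g3]
  calc X = X * (A * X) := by rw [← mul_assoc, h2]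
    _ = X * (Xᴴ * Aᴴ) := by rw [e1]
    _ = X * (Xᴴ * (Aᴴ * (A * Y))) := by rw [← e2]
    _ = X * (Xᴴ * Aᴴ) * (A * Y) := by simp only [mul_assoc]
    _ = X * (A * X) * (A * Y) := by rw [e1]
    _ = (X * A * X) * (A * Y) := by rw [mul_assoc X A X]
    _ = X * (A * Y) := by rw [h2]
    _ = X * A * Y := by rw [← mul_assoc]

lemma mp_unique {A X Y : Matrix n n ℂ} (hX : IsMPInv A X) (hY : IsMPInv A Y) : X = Y := by
  obtain ⟨hX1, hX2, hX3, hX4⟩ := hX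
  obtain ⟨hY1, hY2, hY3, hY4⟩ := hY
  have k1 : X = Y * A * X := mp_aux1 hX2 hX4 hY1 hY4
  have k2 : Y = Y * A * X := mp_aux2 hY2 hY3 hX1 hX3
  rw [k1, ← k2]

lemma mp_herm {A Ap : Matrix n n ℂ} (hA : A.IsHermitian) (hAp : IsMPInv A Ap) :
    Apᴴ = Ap := by
  obtain ⟨h1, h2, h3, h4⟩ := hAp
  have hc : IsMPInv A Apᴴ := by
    refine ⟨?_, ?_, ?_, ?_⟩
    · calc A * Apᴴ * A = (Aᴴ * Ap * Aᴴ)ᴴ := by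
            simp only [Matrix.conjTranspose_mul, Matrix.conjTranspose_conjTranspose, mul_assoc]
        _ = (A * Ap * A)ᴴ := by rw [hA.eq]
        _ = Aᴴ := by rw [h1]
        _ = A := hA.eq
    · calc Apᴴ * A * Apᴴ = (Ap * Aᴴ * Ap)ᴴ := by
            simp only [Matrix.conjTranspose_mul, Matrix.conjTranspose_conjTranspose, mul_assoc]
        _ = (Ap * A * Ap)ᴴ := by rw [hA.eq]
        _ = Apᴴ := by rw [h2]
    · calc (A * Apᴴ)ᴴ = Ap * Aᴴ := by
            simp only [Matrix.conjTranspose_mul, Matrix.conjTranspose_conjTranspose]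
        _ = Ap * A := by rw [hA.eq]
        _ = (Ap * A)ᴴ := h4.symm
        _ = Aᴴ * Apᴴ := by simp only [Matrix.conjTranspose_mul]
        _ = A * Apᴴ := by rw [hA.eq]
    · calc (Apᴴ * A)ᴴ = Aᴴ * Ap := by
            simp only [Matrix.conjTranspose_mul, Matrix.conjTranspose_conjTranspose]
        _ = A * Ap := by rw [hA.eq]
        _ = (A * Ap)ᴴ := h3.symm
        _ = Apᴴ * Aᴴ := by simp only [Matrix.conjTranspose_mul]
        _ = Apᴴ * A := by rw [hA.eq]
  exact mp_unique hc ⟨h1, h2, h3, h4⟩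

lemma exists_poly_psqrt {M : Matrix n n ℂ} (hM : M.PosSemidef) :
    ∃ p : ℂ[X], aeval M p = psqrt M ∧ p.eval 0 = 0 := by
  obtain ⟨p, h0, h1, -⟩ := exists_sqrt_poly hM hM
  exact ⟨p, aeval_eq_psqrt hM p h1, h0⟩

lemma commute_psqrt {M Z : Matrix n n ℂ} (hM : M.PosSemidef) (h : Commute M Z) :
    Commute (psqrt M) Z := by
  obtain ⟨p, hp, -⟩ := exists_poly_psqrt hM
  rw [← hp]
  exact commute_aeval h p

lemma psqrt_factor {M : Matrix n n ℂ} (hM : M.PosSemidef) :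
    ∃ W : Matrix n n ℂ, psqrt M = M * W ∧ psqrt M = W * M := by
  obtain ⟨p, hp, h0⟩ := exists_poly_psqrt hM
  have hdvd : (X : ℂ[X]) ∣ p := Polynomial.X_dvd_iff.mpr (by
    rwa [Polynomial.coeff_zero_eq_eval_zero])
  obtain ⟨p₁, rfl⟩ := hdvd
  refine ⟨aeval M p₁, ?_, ?_⟩
  · rw [← hp, _root_.map_mul, Polynomial.aeval_X]
  · rw [← hp, _root_.map_mul, Polynomial.aeval_X]
    exact ((commute_aeval (Commute.refl M) p₁)).eq.symm

lemma psd_mul_commute {A B : Matrix n n ℂ} (hA : A.PosSemidef) (hB : B.PosSemidef)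
    (h : Commute A B) : (A * B).PosSemidef := by
  have hcom : Commute (psqrt A) B := commute_psqrt hA h
  have : A * B = psqrt A * B * (psqrt A)ᴴ := by
    rw [psqrt_herm hA]
    calc A * B = psqrt A * psqrt A * B := by rw [psqrt_mul_self hA]
      _ = psqrt A * (psqrt A * B) := by rw [mul_assoc]
      _ = psqrt A * (B * psqrt A) := by rw [hcom.eq]
      _ = psqrt A * B * psqrt A := by rw [mul_assoc]
  rw [this]
  exact hB.mul_mul_conjTranspose_same (psqrt A)

/-! ### Euclidean-space bridge -/

lemma toEuclideanLin_mul (M N : Matrix n n ℂ) :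
    Matrix.toEuclideanLin (M * N)
      = (Matrix.toEuclideanLin M).comp (Matrix.toEuclideanLin N) := by
  ext v
  simp [Matrix.toEuclideanLin_apply, Matrix.mulVec_mulVec]

lemma toEuclideanLin_zero_iff (M : Matrix n n ℂ) (x : EuclideanSpace ℂ n) :
    Matrix.toEuclideanLin M x = 0 ↔ M *ᵥ (WithLp.equiv 2 (n → ℂ) x) = 0 := by
  rw [Matrix.toEuclideanLin_apply]
  constructor
  · intro h
    have := congrArg (WithLp.equiv 2 (n → ℂ)) h
    simpa using this
  · intro h
    rw [show M *ᵥ x.ofLp = 0 from h]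
    rfl

omit [DecidableEq n] in
lemma ker_adjoint' (f : EuclideanSpace ℂ n →ₗ[ℂ] EuclideanSpace ℂ n) :
    LinearMap.ker (LinearMap.adjoint f) = (LinearMap.range f)ᗮ := by
  ext x
  simp only [LinearMap.mem_ker, Submodule.mem_orthogonal]
  constructor
  · rintro h u ⟨y, rfl⟩
    rw [← inner_conj_symm, ← LinearMap.adjoint_inner_left, h, inner_zero_left, map_zero]
  · intro h
    rw [← inner_self_eq_zero (𝕜 := ℂ), LinearMap.adjoint_inner_left]
    have h2 := h (f (LinearMap.adjoint f x)) ⟨_, rfl⟩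
    rw [← inner_conj_symm] at h2
    have h3 := congrArg (starRingEnd ℂ) h2
    simpa using h3

lemma range_toEuclideanLin_conjTranspose (M : Matrix n n ℂ) :
    LinearMap.range (Matrix.toEuclideanLin Mᴴ)
      = (LinearMap.ker (Matrix.toEuclideanLin M))ᗮ := by
  rw [Matrix.toEuclideanLin_conjTranspose_eq_adjoint]
  have h1 := ker_adjoint' (LinearMap.adjoint (Matrix.toEuclideanLin M))
  rw [LinearMap.adjoint_adjoint] at h1
  rw [h1, Submodule.orthogonal_orthogonal]

lemma mul_eq_of_range_le {M N : Matrix n n ℂ} (hM : M * M = M)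
    (hle : LinearMap.range (Matrix.toEuclideanLin N)
      ≤ LinearMap.range (Matrix.toEuclideanLin M)) : M * N = N := by
  apply (Matrix.toEuclideanLin (𝕜 := ℂ) (m := n) (n := n)).injective
  rw [toEuclideanLin_mul]
  refine LinearMap.ext fun x => ?_
  have hmem : Matrix.toEuclideanLin N x ∈ LinearMap.range (Matrix.toEuclideanLin M) :=
    hle ⟨x, rfl⟩
  obtain ⟨y, hy⟩ := hmem
  have hfix : Matrix.toEuclideanLin M (Matrix.toEuclideanLin M y)
      = Matrix.toEuclideanLin M y := by
    have h5 := congrArg (fun f => f y) (toEuclideanLin_mul M M)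
    simp only [LinearMap.comp_apply] at h5
    rw [← h5, hM]
  simp only [LinearMap.comp_apply]
  rw [← hy, hfix]

lemma proj_unique {R R' : Matrix n n ℂ} (hR : R.IsHermitian) (hRi : R * R = R)
    (hR' : R'.IsHermitian) (hR'i : R' * R' = R')
    (hrange : LinearMap.range (Matrix.toEuclideanLin R)
      = LinearMap.range (Matrix.toEuclideanLin R')) : R = R' := by
  have h1 : R * R' = R' := mul_eq_of_range_le hRi (le_of_eq hrange.symm)
  have h2 : R' * R = R := mul_eq_of_range_le hR'i (le_of_eq hrange)
  calc R = R' * R := h2.symm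
    _ = (Rᴴ * R'ᴴ)ᴴ := by
        rw [← Matrix.conjTranspose_mul, Matrix.conjTranspose_conjTranspose]
    _ = (R * R')ᴴ := by rw [hR.eq, hR'.eq]
    _ = R'ᴴ := by rw [h1]
    _ = R' := hR'.eq

lemma range_proj_eq_msupp {A Ap : Matrix n n ℂ} (hA : A.IsHermitian)
    (h1 : A * Ap * A = A) : LinearMap.range (Matrix.toEuclideanLin (A * Ap)) = msupp A := by
  have hsupp : msupp A = LinearMap.range (Matrix.toEuclideanLin A) := by
    rw [msupp, ← range_toEuclideanLin_conjTranspose, hA.eq]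
  rw [hsupp]
  apply le_antisymm
  · rw [toEuclideanLin_mul]
    exact LinearMap.range_comp_le_range _ _
  · conv_lhs => rw [← h1]
    rw [toEuclideanLin_mul]
    exact LinearMap.range_comp_le_range _ _

/-! ### vector helpers -/

omit [DecidableEq n] in
lemma sandwich_mulVec_zero {S R : Matrix n n ℂ} (hS : Sᴴ = S) (hR : R.PosSemidef)
    (x : n → ℂ) (h : (S * R * S) *ᵥ x = 0) : R *ᵥ (S *ᵥ x) = 0 := by
  have e : (S * R * S) *ᵥ x = S *ᵥ (R *ᵥ (S *ᵥ x)) := by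
    rw [Matrix.mulVec_mulVec, Matrix.mulVec_mulVec]
  have h1 : star x ⬝ᵥ (S *ᵥ (R *ᵥ (S *ᵥ x))) = 0 := by
    rw [← e, h, dotProduct_zero]
  have h2 : star x ⬝ᵥ (S *ᵥ (R *ᵥ (S *ᵥ x))) = star (S *ᵥ x) ⬝ᵥ (R *ᵥ (S *ᵥ x)) := by
    rw [Matrix.dotProduct_mulVec, Matrix.star_mulVec, hS]
  exact (hR.dotProduct_mulVec_zero_iff _).mp (h2 ▸ h1)

omit [DecidableEq n] in
lemma mulVec_eq_zero_of_gram {C : Matrix n n ℂ} {w : n → ℂ} (h : (Cᴴ * C) *ᵥ w = 0) :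
    C *ᵥ w = 0 := by
  apply dotProduct_star_self_eq_zero.mp
  rw [Matrix.star_mulVec, ← Matrix.dotProduct_mulVec, Matrix.mulVec_mulVec, h,
    dotProduct_zero]

/-! ### the central lemma -/

lemma central {A B Ap Bp : Matrix n n ℂ} (hA : A.PosSemidef) (hB : B.PosSemidef)
    (hAp : IsMPInv A Ap) (hBp : IsMPInv B Bp) :
    (geoMean Bp B Ap * geoMean A Ap B = geoMean A Ap B * geoMean Bp B Ap
      ↔ (A * Ap) * (B * Bp) = (B * Bp) * (A * Ap)) := by
  obtain ⟨hAp1, hAp2, hAp3, hAp4⟩ := hAp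
  obtain ⟨hBp1, hBp2, hBp3, hBp4⟩ := hBp
  have hApH : Apᴴ = Ap := mp_herm hA.1 ⟨hAp1, hAp2, hAp3, hAp4⟩
  have hBpH : Bpᴴ = Bp := mp_herm hB.1 ⟨hBp1, hBp2, hBp3, hBp4⟩
  have hApPSD : Ap.PosSemidef := by
    have h0 := hA.conjTranspose_mul_mul_same Ap
    rwa [hApH, hAp2] at h0
  have hBpPSD : Bp.PosSemidef := by
    have h0 := hB.conjTranspose_mul_mul_same Bp
    rwa [hBpH, hBp2] at h0
  have hPcomm : A * Ap = Ap * A := by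
    conv_lhs => rw [← hAp3]
    rw [Matrix.conjTranspose_mul, hApH, hA.1.eq]
  have hQcomm : B * Bp = Bp * B := by
    conv_lhs => rw [← hBp3]
    rw [Matrix.conjTranspose_mul, hBpH, hB.1.eq]
  simp only [geoMean]
  set S := psqrt A with hSdef
  set V := psqrt Ap with hVdef
  set T := psqrt B with hTdef
  set U := psqrt Bp with hUdef
  have hSS : S * S = A := psqrt_mul_self hA
  have hVV : V * V = Ap := psqrt_mul_self hApPSD
  have hTT : T * T = B := psqrt_mul_self hB
  have hUU : U * U = Bp := psqrt_mul_self hBpPSD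
  have hSH : Sᴴ = S := psqrt_herm hA
  have hVH : Vᴴ = V := psqrt_herm hApPSD
  have hTH : Tᴴ = T := psqrt_herm hB
  have hUH : Uᴴ = U := psqrt_herm hBpPSD
  have hPP : (A * Ap) * (A * Ap) = A * Ap := by rw [← mul_assoc, hAp1]
  have hQQ : (B * Bp) * (B * Bp) = B * Bp := by rw [← mul_assoc, hBp1]
  have hPQH : ((A * Ap) * (B * Bp))ᴴ = (B * Bp) * (A * Ap) := by
    rw [Matrix.conjTranspose_mul, hAp3, hBp3]
  have hQPH : ((B * Bp) * (A * Ap))ᴴ = (A * Ap) * (B * Bp) := by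
    rw [Matrix.conjTranspose_mul, hAp3, hBp3]
  have hPpsd : (A * Ap).PosSemidef := by
    have h0 := Matrix.posSemidef_conjTranspose_mul_self (A * Ap)
    rwa [hAp3, hPP] at h0
  have hQpsd : (B * Bp).PosSemidef := by
    have h0 := Matrix.posSemidef_conjTranspose_mul_self (B * Bp)
    rwa [hBp3, hQQ] at h0
  have hcomSV : Commute S V := by
    have h1 : Commute A Ap := hPcomm
    have h2 : Commute S Ap := commute_psqrt hA h1
    exact (commute_psqrt hApPSD h2.symm).symm
  have hcomTU : Commute T U := by
    have h1 : Commute B Bp := hQcomm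
    have h2 : Commute T Bp := commute_psqrt hB h1
    exact (commute_psqrt hBpPSD h2.symm).symm
  have hSV : S * V = A * Ap := by
    have hsq : (S * V) * (S * V) = (A * Ap) * (A * Ap) := by
      rw [hPP]
      calc S * V * (S * V) = S * (V * S) * V := by simp only [mul_assoc]
        _ = S * (S * V) * V := by rw [hcomSV.symm.eq]
        _ = S * S * (V * V) := by simp only [mul_assoc]
        _ = A * Ap := by rw [hSS, hVV]
    have hSVpsd : (S * V).PosSemidef := psd_mul_commute (psqrt_posSemidef hA)
      (psqrt_posSemidef hApPSD) hcomSV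
    open scoped MatrixOrder in
    exact (CFC.sq_eq_sq_iff (S * V) (A * Ap) hSVpsd.nonneg hPpsd.nonneg).mp
      (by rw [pow_two, pow_two, hsq])
  have hVS : V * S = A * Ap := by rw [← hcomSV.eq, hSV]
  have hTU : T * U = B * Bp := by
    have hsq : (T * U) * (T * U) = (B * Bp) * (B * Bp) := by
      rw [hQQ]
      calc T * U * (T * U) = T * (U * T) * U := by simp only [mul_assoc]
        _ = T * (T * U) * U := by rw [hcomTU.symm.eq]
        _ = T * T * (U * U) := by simp only [mul_assoc]
        _ = B * Bp := by rw [hTT, hUU]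
    have hTUpsd : (T * U).PosSemidef := psd_mul_commute (psqrt_posSemidef hB)
      (psqrt_posSemidef hBpPSD) hcomTU
    open scoped MatrixOrder in
    exact (CFC.sq_eq_sq_iff (T * U) (B * Bp) hTUpsd.nonneg hQpsd.nonneg).mp
      (by rw [pow_two, pow_two, hsq])
  have hUT : U * T = B * Bp := by rw [← hcomTU.eq, hTU]
  have hPA : (A * Ap) * A = A := hAp1
  have hPAp : (A * Ap) * Ap = Ap := by rw [hPcomm]; exact hAp2
  have hQB : (B * Bp) * B = B := hBp1
  have hQBp : (B * Bp) * Bp = Bp := by rw [hQcomm]; exact hBp2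
  have hAA : A * (A * Ap) = A := by rw [hPcomm, ← mul_assoc, hAp1]
  have hApAAp : Ap * (A * Ap) = Ap := by rw [← mul_assoc, hAp2]
  have hBQ : B * (B * Bp) = B := by rw [hQcomm, ← mul_assoc, hBp1]
  have hBpBBp : Bp * (B * Bp) = Bp := by rw [← mul_assoc, hBp2]
  obtain ⟨WS, hWS1, hWS2⟩ := psqrt_factor hA
  obtain ⟨WV, hWV1, hWV2⟩ := psqrt_factor hApPSD
  obtain ⟨WT, hWT1, hWT2⟩ := psqrt_factor hB
  obtain ⟨WU, hWU1, hWU2⟩ := psqrt_factor hBpPSD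
  rw [← hSdef] at hWS1 hWS2
  rw [← hVdef] at hWV1 hWV2
  rw [← hTdef] at hWT1 hWT2
  rw [← hUdef] at hWU1 hWU2
  have hPS : (A * Ap) * S = S := by rw [hWS1, ← mul_assoc, hPA]
  have hSP : S * (A * Ap) = S := by rw [hWS2, mul_assoc, hAA]
  have hPV : (A * Ap) * V = V := by rw [hWV1, ← mul_assoc, hPAp]
  have hVP : V * (A * Ap) = V := by rw [hWV2, mul_assoc, hApAAp]
  have hQT : (B * Bp) * T = T := by rw [hWT1, ← mul_assoc, hQB]
  have hTQ : T * (B * Bp) = T := by rw [hWT2, mul_assoc, hBQ]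
  have hQU : (B * Bp) * U = U := by rw [hWU1, ← mul_assoc, hQBp]
  have hUQ : U * (B * Bp) = U := by rw [hWU2, mul_assoc, hBpBBp]
  -- contextual rewriting helpers
  have m1 : ∀ Z : Matrix n n ℂ, V * (S * Z) = (A * Ap) * Z := fun Z => by
    rw [← mul_assoc, hVS]
  have m1' : ∀ Z : Matrix n n ℂ, S * (V * Z) = (A * Ap) * Z := fun Z => by
    rw [← mul_assoc, hSV]
  have m2 : ∀ Z : Matrix n n ℂ, U * (T * Z) = (B * Bp) * Z := fun Z => by
    rw [← mul_assoc, hUT]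
  have m3 : ∀ Z : Matrix n n ℂ, B * ((B * Bp) * Z) = B * Z := fun Z => by
    rw [← mul_assoc, hBQ]
  have m4 : ∀ Z : Matrix n n ℂ, (A * Ap) * (Ap * Z) = Ap * Z := fun Z => by
    rw [← mul_assoc, hPAp]
  have m5 : ∀ Z : Matrix n n ℂ, T * (T * Z) = B * Z := fun Z => by
    rw [← mul_assoc, hTT]
  have m6 : ∀ Z : Matrix n n ℂ, V * (V * Z) = Ap * Z := fun Z => by
    rw [← mul_assoc, hVV]
  -- gram matrices
  have hN1psd : (V * B * V).PosSemidef := by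
    have h0 := hB.mul_mul_conjTranspose_same V
    rwa [hVH] at h0
  have hN2psd : (T * Ap * T).PosSemidef := by
    have h0 := hApPSD.mul_mul_conjTranspose_same T
    rwa [hTH] at h0
  have hCHC : (T * V) * (V * T) = T * Ap * T := by
    simp only [mul_assoc]; rw [m6]
  have hCCH : (V * T) * (T * V) = V * B * V := by
    simp only [mul_assoc]; rw [m5]
  obtain ⟨p, hp0, hpe₁, hpe₂⟩ := exists_sqrt_poly hN1psd hN2psd
  have hdvd : (X : ℂ[X]) ∣ p := Polynomial.X_dvd_iff.mpr (by
    rwa [Polynomial.coeff_zero_eq_eval_zero])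
  obtain ⟨p₁, hpfac⟩ := hdvd
  have hR1 : aeval (V * B * V) p = psqrt (V * B * V) := aeval_eq_psqrt hN1psd p hpe₁
  have hR2 : aeval (T * Ap * T) p = psqrt (T * Ap * T) := aeval_eq_psqrt hN2psd p hpe₂
  set R₁ := psqrt (V * B * V) with hR₁def
  set R₂ := psqrt (T * Ap * T) with hR₂def
  have hR1H : R₁ᴴ = R₁ := psqrt_herm hN1psd
  have hR2H : R₂ᴴ = R₂ := psqrt_herm hN2psd
  have hW₁comm : aeval (V * B * V) p₁ * (V * B * V)
      = (V * B * V) * aeval (V * B * V) p₁ :=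
    (commute_aeval (Commute.refl (V * B * V)) p₁).eq
  have hW₂comm : aeval (T * Ap * T) p₁ * (T * Ap * T)
      = (T * Ap * T) * aeval (T * Ap * T) p₁ :=
    (commute_aeval (Commute.refl (T * Ap * T)) p₁).eq
  have hR1fac : R₁ = (V * B * V) * aeval (V * B * V) p₁ := by
    rw [← hR1, hpfac, _root_.map_mul, Polynomial.aeval_X]
  have hR1fac' : R₁ = aeval (V * B * V) p₁ * (V * B * V) := by rw [hR1fac, ← hW₁comm]
  have hR2fac : R₂ = (T * Ap * T) * aeval (T * Ap * T) p₁ := by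
    rw [← hR2, hpfac, _root_.map_mul, Polynomial.aeval_X]
  have hR2fac' : R₂ = aeval (T * Ap * T) p₁ * (T * Ap * T) := by rw [hR2fac, ← hW₂comm]
  have hGherm : (S * R₁ * S)ᴴ = S * R₁ * S := by
    simp only [Matrix.conjTranspose_mul, hSH, hR1H, mul_assoc]
  have hHherm : (U * R₂ * U)ᴴ = U * R₂ * U := by
    simp only [Matrix.conjTranspose_mul, hUH, hR2H, mul_assoc]
  -- kernel characterizations (no commutation hypotheses used)
  have hHker : ∀ x : n → ℂ, (U * R₂ * U) *ᵥ x = 0 ↔ ((A * Ap) * (B * Bp)) *ᵥ x = 0 := by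
    intro x
    constructor
    · intro hx
      have h1 : R₂ *ᵥ (U *ᵥ x) = 0 := sandwich_mulVec_zero hUH (psqrt_posSemidef hN2psd) x hx
      have h2 : (T * Ap * T) *ᵥ (U *ᵥ x) = 0 := by
        rw [← psqrt_mul_self hN2psd, ← hR₂def, ← Matrix.mulVec_mulVec, h1, Matrix.mulVec_zero]
      have h3 : (V * T) *ᵥ (U *ᵥ x) = 0 := by
        apply mulVec_eq_zero_of_gram
        rw [Matrix.conjTranspose_mul, hVH, hTH, hCHC]
        exact h2
      have h4 : (A * Ap) * (B * Bp) = S * ((V * T) * U) := by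
        rw [← hSV, ← hTU]
        simp only [mul_assoc]
      rw [h4, ← Matrix.mulVec_mulVec, ← Matrix.mulVec_mulVec, h3, Matrix.mulVec_zero]
    · intro hx
      have h0 : V * ((A * Ap) * (B * Bp)) = (V * T) * U := by
        rw [← mul_assoc, hVP, ← hTU, ← mul_assoc]
      have hz : ((V * T) * U) *ᵥ x = 0 := by
        rw [← h0, ← Matrix.mulVec_mulVec, hx, Matrix.mulVec_zero]
      have e2 : U * R₂ * U = (U * aeval (T * Ap * T) p₁ * (T * V)) * ((V * T) * U) := by
        rw [hR2fac', ← hCHC]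
        simp only [mul_assoc]
      rw [e2, ← Matrix.mulVec_mulVec, hz, Matrix.mulVec_zero]
  have hGker : ∀ x : n → ℂ, (S * R₁ * S) *ᵥ x = 0 ↔ ((B * Bp) * (A * Ap)) *ᵥ x = 0 := by
    intro x
    constructor
    · intro hx
      have h1 : R₁ *ᵥ (S *ᵥ x) = 0 := sandwich_mulVec_zero hSH (psqrt_posSemidef hN1psd) x hx
      have h2 : (V * B * V) *ᵥ (S *ᵥ x) = 0 := by
        rw [← psqrt_mul_self hN1psd, ← hR₁def, ← Matrix.mulVec_mulVec, h1, Matrix.mulVec_zero]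
      have h3 : (T * V) *ᵥ (S *ᵥ x) = 0 := by
        apply mulVec_eq_zero_of_gram
        rw [Matrix.conjTranspose_mul, hVH, hTH, hCCH]
        exact h2
      have h4 : (B * Bp) * (A * Ap) = U * ((T * V) * S) := by
        rw [← hUT, ← hVS]
        simp only [mul_assoc]
      rw [h4, ← Matrix.mulVec_mulVec, ← Matrix.mulVec_mulVec, h3, Matrix.mulVec_zero]
    · intro hx
      have h0 : T * ((B * Bp) * (A * Ap)) = (T * V) * S := by
        rw [← mul_assoc, hTQ, ← hVS, ← mul_assoc]
      have hz : ((T * V) * S) *ᵥ x = 0 := by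
        rw [← h0, ← Matrix.mulVec_mulVec, hx, Matrix.mulVec_zero]
      have e2 : S * R₁ * S = (S * aeval (V * B * V) p₁ * (V * T)) * ((T * V) * S) := by
        rw [hR1fac', ← hCCH]
        simp only [mul_assoc]
      rw [e2, ← Matrix.mulVec_mulVec, hz, Matrix.mulVec_zero]
  constructor
  · -- commuting geometric means implies commuting projections
    intro hcomm
    have hGfac : S * R₁ * S
        = ((A * Ap) * (B * Bp)) * (B * (V * (aeval (V * B * V) p₁ * S))) := by
      rw [hR1fac]
      calc S * ((V * B * V) * aeval (V * B * V) p₁) * S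
          = S * (V * (B * (V * (aeval (V * B * V) p₁ * S)))) := by simp only [mul_assoc]
        _ = (A * Ap) * (B * (V * (aeval (V * B * V) p₁ * S))) := by rw [m1']
        _ = (A * Ap) * (((B * Bp) * B) * (V * (aeval (V * B * V) p₁ * S))) := by rw [hQB]
        _ = ((A * Ap) * (B * Bp)) * (B * (V * (aeval (V * B * V) p₁ * S))) := by
            simp only [mul_assoc]
    have hHfac : U * R₂ * U
        = ((B * Bp) * (A * Ap)) * (Ap * (T * (aeval (T * Ap * T) p₁ * U))) := by
      rw [hR2fac]
      calc U * ((T * Ap * T) * aeval (T * Ap * T) p₁) * U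
          = U * (T * (Ap * (T * (aeval (T * Ap * T) p₁ * U)))) := by simp only [mul_assoc]
        _ = (B * Bp) * (Ap * (T * (aeval (T * Ap * T) p₁ * U))) := by rw [m2]
        _ = (B * Bp) * (((A * Ap) * Ap) * (T * (aeval (T * Ap * T) p₁ * U))) := by rw [hPAp]
        _ = ((B * Bp) * (A * Ap)) * (Ap * (T * (aeval (T * Ap * T) p₁ * U))) := by
            simp only [mul_assoc]
    have hker1 : ∀ x : n → ℂ, (U * R₂ * U) *ᵥ x = 0 → (S * R₁ * S) *ᵥ x = 0 := by
      intro x hx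
      have hy : (U * R₂ * U) *ᵥ ((S * R₁ * S) *ᵥ x) = 0 := by
        rw [Matrix.mulVec_mulVec, hcomm, ← Matrix.mulVec_mulVec, hx, Matrix.mulVec_zero]
      have h2 : ((A * Ap) * (B * Bp)) *ᵥ ((S * R₁ * S) *ᵥ x) = 0 := (hHker _).mp hy
      have h3 : (S * R₁ * S) *ᵥ x
          = ((A * Ap) * (B * Bp)) *ᵥ ((B * (V * (aeval (V * B * V) p₁ * S))) *ᵥ x) := by
        rw [Matrix.mulVec_mulVec, ← hGfac]
      have hPPQ : (A * Ap) * ((A * Ap) * (B * Bp)) = (A * Ap) * (B * Bp) := by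
        rw [← mul_assoc, hPP]
      have h4 : (A * Ap) *ᵥ ((S * R₁ * S) *ᵥ x) = (S * R₁ * S) *ᵥ x := by
        rw [h3, Matrix.mulVec_mulVec, hPPQ]
      have h5 : (B * Bp) *ᵥ ((S * R₁ * S) *ᵥ x) = 0 := by
        apply (hQpsd.dotProduct_mulVec_zero_iff _).mp
        calc star ((S * R₁ * S) *ᵥ x) ⬝ᵥ ((B * Bp) *ᵥ ((S * R₁ * S) *ᵥ x))
            = star ((A * Ap) *ᵥ ((S * R₁ * S) *ᵥ x))
              ⬝ᵥ ((B * Bp) *ᵥ ((S * R₁ * S) *ᵥ x)) := by rw [h4]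
          _ = star ((S * R₁ * S) *ᵥ x)
              ⬝ᵥ (((A * Ap) * (B * Bp)) *ᵥ ((S * R₁ * S) *ᵥ x)) := by
              rw [Matrix.star_mulVec, hAp3, ← Matrix.dotProduct_mulVec,
                Matrix.mulVec_mulVec]
          _ = 0 := by rw [h2, dotProduct_zero]
      apply dotProduct_star_self_eq_zero.mp
      calc star ((S * R₁ * S) *ᵥ x) ⬝ᵥ ((S * R₁ * S) *ᵥ x)
          = star (((A * Ap) * (B * Bp)) *ᵥ ((B * (V * (aeval (V * B * V) p₁ * S))) *ᵥ x))
            ⬝ᵥ ((S * R₁ * S) *ᵥ x) := by nth_rewrite 1 [h3]; rfl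
        _ = star ((B * (V * (aeval (V * B * V) p₁ * S))) *ᵥ x)
            ⬝ᵥ (((B * Bp) * (A * Ap)) *ᵥ ((S * R₁ * S) *ᵥ x)) := by
            rw [Matrix.star_mulVec, hPQH, ← Matrix.dotProduct_mulVec]
        _ = 0 := by
            have h6 : ((B * Bp) * (A * Ap)) *ᵥ ((S * R₁ * S) *ᵥ x) = 0 := by
              rw [← Matrix.mulVec_mulVec, h4, h5]
            rw [h6, dotProduct_zero]
    have hker2 : ∀ x : n → ℂ, (S * R₁ * S) *ᵥ x = 0 → (U * R₂ * U) *ᵥ x = 0 := by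
      intro x hx
      have hy : (S * R₁ * S) *ᵥ ((U * R₂ * U) *ᵥ x) = 0 := by
        rw [Matrix.mulVec_mulVec, ← hcomm, ← Matrix.mulVec_mulVec, hx, Matrix.mulVec_zero]
      have h2 : ((B * Bp) * (A * Ap)) *ᵥ ((U * R₂ * U) *ᵥ x) = 0 := (hGker _).mp hy
      have h3 : (U * R₂ * U) *ᵥ x
          = ((B * Bp) * (A * Ap)) *ᵥ ((Ap * (T * (aeval (T * Ap * T) p₁ * U))) *ᵥ x) := by
        rw [Matrix.mulVec_mulVec, ← hHfac]
      have hQQP : (B * Bp) * ((B * Bp) * (A * Ap)) = (B * Bp) * (A * Ap) := by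
        rw [← mul_assoc, hQQ]
      have h4 : (B * Bp) *ᵥ ((U * R₂ * U) *ᵥ x) = (U * R₂ * U) *ᵥ x := by
        rw [h3, Matrix.mulVec_mulVec, hQQP]
      have h5 : (A * Ap) *ᵥ ((U * R₂ * U) *ᵥ x) = 0 := by
        apply (hPpsd.dotProduct_mulVec_zero_iff _).mp
        calc star ((U * R₂ * U) *ᵥ x) ⬝ᵥ ((A * Ap) *ᵥ ((U * R₂ * U) *ᵥ x))
            = star ((B * Bp) *ᵥ ((U * R₂ * U) *ᵥ x))
              ⬝ᵥ ((A * Ap) *ᵥ ((U * R₂ * U) *ᵥ x)) := by rw [h4]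
          _ = star ((U * R₂ * U) *ᵥ x)
              ⬝ᵥ (((B * Bp) * (A * Ap)) *ᵥ ((U * R₂ * U) *ᵥ x)) := by
              rw [Matrix.star_mulVec, hBp3, ← Matrix.dotProduct_mulVec,
                Matrix.mulVec_mulVec]
          _ = 0 := by rw [h2, dotProduct_zero]
      apply dotProduct_star_self_eq_zero.mp
      calc star ((U * R₂ * U) *ᵥ x) ⬝ᵥ ((U * R₂ * U) *ᵥ x)
          = star (((B * Bp) * (A * Ap)) *ᵥ ((Ap * (T * (aeval (T * Ap * T) p₁ * U))) *ᵥ x))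
            ⬝ᵥ ((U * R₂ * U) *ᵥ x) := by nth_rewrite 1 [h3]; rfl
        _ = star ((Ap * (T * (aeval (T * Ap * T) p₁ * U))) *ᵥ x)
            ⬝ᵥ (((A * Ap) * (B * Bp)) *ᵥ ((U * R₂ * U) *ᵥ x)) := by
            rw [Matrix.star_mulVec, hQPH, ← Matrix.dotProduct_mulVec]
        _ = 0 := by
            have h6 : ((A * Ap) * (B * Bp)) *ᵥ ((U * R₂ * U) *ᵥ x) = 0 := by
              rw [← Matrix.mulVec_mulVec, h4, h5]
            rw [h6, dotProduct_zero]
    have hkerPQ : ∀ x : n → ℂ,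
        ((A * Ap) * (B * Bp)) *ᵥ x = 0 ↔ ((B * Bp) * (A * Ap)) *ᵥ x = 0 := by
      intro x
      constructor
      · intro h
        exact (hGker x).mp (hker1 x ((hHker x).mpr h))
      · intro h
        exact (hHker x).mp (hker2 x ((hGker x).mpr h))
    have hkerlin : LinearMap.ker (Matrix.toEuclideanLin ((A * Ap) * (B * Bp)))
        = LinearMap.ker (Matrix.toEuclideanLin ((B * Bp) * (A * Ap))) := by
      ext x
      rw [LinearMap.mem_ker, LinearMap.mem_ker, toEuclideanLin_zero_iff,
        toEuclideanLin_zero_iff]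
      exact hkerPQ _
    have hranlin : LinearMap.range (Matrix.toEuclideanLin ((A * Ap) * (B * Bp)))
        = LinearMap.range (Matrix.toEuclideanLin ((B * Bp) * (A * Ap))) := by
      have e1 : LinearMap.range (Matrix.toEuclideanLin ((B * Bp) * (A * Ap)))
          = (LinearMap.ker (Matrix.toEuclideanLin ((A * Ap) * (B * Bp))))ᗮ := by
        rw [← hPQH, range_toEuclideanLin_conjTranspose]
      have e2 : LinearMap.range (Matrix.toEuclideanLin ((A * Ap) * (B * Bp)))
          = (LinearMap.ker (Matrix.toEuclideanLin ((B * Bp) * (A * Ap))))ᗮ := by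
        rw [← hQPH, range_toEuclideanLin_conjTranspose]
      rw [e2, ← hkerlin, ← e1]
    have hle : LinearMap.range (Matrix.toEuclideanLin ((A * Ap) * (B * Bp)))
        ≤ LinearMap.range (Matrix.toEuclideanLin (B * Bp)) := by
      rw [hranlin, toEuclideanLin_mul]
      exact LinearMap.range_comp_le_range _ _
    have hQPQ : (B * Bp) * ((A * Ap) * (B * Bp)) = (A * Ap) * (B * Bp) :=
      mul_eq_of_range_le hQQ hle
    have hherm : ((A * Ap) * (B * Bp))ᴴ = (A * Ap) * (B * Bp) := by
      conv_lhs => rw [← hQPQ]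
      rw [Matrix.conjTranspose_mul, hPQH, hBp3, mul_assoc, hQPQ]
    rw [← hherm, hPQH]
  · -- commuting projections implies commuting geometric means
    intro hPQ
    have m7 : ∀ Z : Matrix n n ℂ, (A * Ap) * ((B * Bp) * Z) = (B * Bp) * ((A * Ap) * Z) :=
      fun Z => by rw [← mul_assoc, hPQ, mul_assoc]
    have hbase : (V * B * V) * (S * U) * (T * Ap * T) = (V * T) * (T * Ap * T) := by
      simp only [mul_assoc]
      rw [m1, m2, m7, m4, m3, m5]
    have hNC : (V * B * V) * (V * T) = (V * T) * (T * Ap * T) := by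
      simp only [mul_assoc]
      rw [m6, m5]
    have hpow : ∀ k : ℕ, (V * B * V) ^ k * (V * T) = (V * T) * (T * Ap * T) ^ k := by
      intro k
      induction k with
      | zero => simp
      | succ k ih =>
          rw [pow_succ, pow_succ, mul_assoc, hNC, ← mul_assoc, ih, mul_assoc]
    have hTW : ∀ q : ℂ[X],
        aeval (V * B * V) q * (V * T) = (V * T) * aeval (T * Ap * T) q := by
      intro q
      induction q using Polynomial.induction_on' with
      | add a b ha hb => rw [map_add, map_add, add_mul, mul_add, ha, hb]
      | monomial k a =>
          rw [aeval_monomial, aeval_monomial, Algebra.algebraMap_eq_smul_one]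
          simp only [smul_mul_assoc, one_mul, mul_smul_comm]
          rw [hpow k]
    have hkey : R₁ * ((S * U) * R₂)
        = (V * T) * aeval (T * Ap * T) (p₁ * (X * p₁)) := by
      rw [hR1fac', hR2fac]
      calc aeval (V * B * V) p₁ * (V * B * V) * ((S * U) * ((T * Ap * T) * aeval (T * Ap * T) p₁))
          = aeval (V * B * V) p₁ * ((V * B * V) * (S * U) * (T * Ap * T))
            * aeval (T * Ap * T) p₁ := by simp only [mul_assoc]
        _ = aeval (V * B * V) p₁ * ((V * T) * (T * Ap * T)) * aeval (T * Ap * T) p₁ := by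
            rw [hbase]
        _ = (aeval (V * B * V) p₁ * (V * T)) * ((T * Ap * T) * aeval (T * Ap * T) p₁) := by
            simp only [mul_assoc]
        _ = ((V * T) * aeval (T * Ap * T) p₁) * ((T * Ap * T) * aeval (T * Ap * T) p₁) := by
            rw [hTW p₁]
        _ = (V * T) * aeval (T * Ap * T) (p₁ * (X * p₁)) := by
            rw [_root_.map_mul, _root_.map_mul, Polynomial.aeval_X]
            simp only [mul_assoc]
    have hvan : aeval (T * Ap * T) (X * (p₁ * (X * p₁) - 1)) = 0 := by
      apply aeval_eq_zero_of_eigs hN2psd.1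
      intro i
      have hnn := hN2psd.eigenvalues_nonneg i
      have hv := hpe₂ i
      rw [hpfac] at hv
      simp only [Polynomial.eval_mul, Polynomial.eval_sub, Polynomial.eval_one,
        Polynomial.eval_X] at hv ⊢
      have hs : ((Real.sqrt (hN2psd.1.eigenvalues i) : ℝ) : ℂ) ^ 2
          = (((hN2psd.1.eigenvalues i) : ℝ) : ℂ) := by
        rw [← Complex.ofReal_pow, Real.sq_sqrt hnn]
      linear_combination (((hN2psd.1.eigenvalues i : ℝ) : ℂ)
        * Polynomial.eval ((hN2psd.1.eigenvalues i : ℝ) : ℂ) p₁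
        + ((Real.sqrt (hN2psd.1.eigenvalues i) : ℝ) : ℂ)) * hv + hs
    have hNM : (T * Ap * T) * aeval (T * Ap * T) (p₁ * (X * p₁) - 1) = 0 := by
      have h0 := hvan
      rwa [_root_.map_mul, Polynomial.aeval_X] at h0
    have hCM : (V * T) * aeval (T * Ap * T) (p₁ * (X * p₁) - 1) = 0 := by
      apply Matrix.conjTranspose_mul_self_eq_zero.mp
      calc ((V * T) * aeval (T * Ap * T) (p₁ * (X * p₁) - 1))ᴴ
            * ((V * T) * aeval (T * Ap * T) (p₁ * (X * p₁) - 1))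
          = (aeval (T * Ap * T) (p₁ * (X * p₁) - 1))ᴴ
            * (((T * V) * (V * T)) * aeval (T * Ap * T) (p₁ * (X * p₁) - 1)) := by
            simp only [Matrix.conjTranspose_mul, hVH, hTH, mul_assoc]
        _ = (aeval (T * Ap * T) (p₁ * (X * p₁) - 1))ᴴ
            * ((T * Ap * T) * aeval (T * Ap * T) (p₁ * (X * p₁) - 1)) := by rw [hCHC]
        _ = 0 := by rw [hNM, mul_zero]
    have hGHPQ : (S * R₁ * S) * (U * R₂ * U) = (A * Ap) * (B * Bp) := by
      calc (S * R₁ * S) * (U * R₂ * U)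
          = S * (R₁ * ((S * U) * R₂)) * U := by simp only [mul_assoc]
        _ = S * ((V * T) * aeval (T * Ap * T) (p₁ * (X * p₁))) * U := by rw [hkey]
        _ = S * ((V * T) * (aeval (T * Ap * T) (p₁ * (X * p₁) - 1) + 1)) * U := by
            have haev : aeval (T * Ap * T) (p₁ * (X * p₁))
                = aeval (T * Ap * T) (p₁ * (X * p₁) - 1) + 1 := by
              rw [_root_.map_sub, _root_.map_one, sub_add_cancel]
            rw [haev]
        _ = S * ((V * T) * aeval (T * Ap * T) (p₁ * (X * p₁) - 1) + (V * T)) * U := by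
            rw [mul_add, mul_one]
        _ = S * (V * T) * U := by rw [hCM, zero_add]
        _ = (A * Ap) * (B * Bp) := by
            rw [← hSV, ← hTU]
            simp only [mul_assoc]
    have h1 : (U * R₂ * U) * (S * R₁ * S) = ((S * R₁ * S) * (U * R₂ * U))ᴴ := by
      rw [Matrix.conjTranspose_mul, hGherm, hHherm]
    rw [h1, hGHPQ, hPQH, ← hPQ, ← hGHPQ]

end GeoAux

open Matrix GeoAux in
/-- M(B⁺,A⁺) and M(A,B) commute iff the support projections of A and B commute. -/
theorem geoMean_commute_iff_proj_commute
    {n : Type*} [Fintype n] [DecidableEq n]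
    (A B Ap Bp PiA PiB : Matrix n n ℂ) (hA : A.PosSemidef) (hB : B.PosSemidef)
    (hAp : IsMPInv A Ap) (hBp : IsMPInv B Bp)
    (hAherm : PiA.IsHermitian) (hAidem : PiA * PiA = PiA)
    (hArange : LinearMap.range (Matrix.toEuclideanLin PiA) = msupp A)
    (hBherm : PiB.IsHermitian) (hBidem : PiB * PiB = PiB)
    (hBrange : LinearMap.range (Matrix.toEuclideanLin PiB) = msupp B) :
    geoMean Bp B Ap * geoMean A Ap B = geoMean A Ap B * geoMean Bp B Ap ↔
      PiA * PiB = PiB * PiA := by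
  have hPP : (A * Ap) * (A * Ap) = A * Ap := by rw [← mul_assoc, hAp.1]
  have hQQ : (B * Bp) * (B * Bp) = B * Bp := by rw [← mul_assoc, hBp.1]
  have h1 : PiA = A * Ap :=
    proj_unique hAherm hAidem hAp.2.2.1 hPP
      (hArange.trans (range_proj_eq_msupp hA.1 hAp.1).symm)
  have h2 : PiB = B * Bp :=
    proj_unique hBherm hBidem hBp.2.2.1 hQQ
      (hBrange.trans (range_proj_eq_msupp hB.1 hBp.1).symm)
  rw [h1, h2]
  exact central hA hB hAp hBp
end
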